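/- arXiv:2603.14024 — 12 statements merged into one kernel-verified Lean document; each statement's English description precedes it below -/
import Mathlib

section
/- Assume p ∈ [1, ∞), f(y,m) is increasing in m ∈ ℝ and increasing in y ∈ ℝ, and y ↦ U(f(y,m)) is concave for each m ∈ ℝ. Then the generalized shortfall risk measure ρ^{U,f,B} admits the dual representation: for every X ∈ L^p, ρ^{U,f,B}(X) = sup_{Q ∈ 𝒬} R(E_Q[−X], Q), where 𝒬 is the set of probability measures Q on (Ω, 𝓕) absolutely continuous with respect to P whose density dQ/dP lies in L^{p'} (p' the conjugate exponent), E_Q denotes expectation under Q, and R(x, Q) = inf{ m ∈ ℝ : sup_{Y ∈ 𝒜^m} E_Q[−Y] ≥ x } with infimum and supremum taken in the extended reals. -/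
open MeasureTheory Real
open scoped ENNReal
open scoped NNReal

noncomputable def superg (φ : ℝ → ℝ) (x : ℝ) : ℝ :=
  sInf ((fun y => (φ x - φ y) / (x - y)) '' Set.Iio x)

section superg
variable {φ : ℝ → ℝ} (hφ : ConcaveOn ℝ Set.univ φ)
include hφ

lemma slope_anti3 {a b c : ℝ} (hab : a < b) (hbc : b < c) :
    (φ c - φ b) / (c - b) ≤ (φ b - φ a) / (b - a) :=
  hφ.slope_anti_adjacent (Set.mem_univ a) (Set.mem_univ c) hab hbc

lemma superg_bddBelow (x : ℝ) :
    BddBelow ((fun y => (φ x - φ y) / (x - y)) '' Set.Iio x) := by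
  refine ⟨(φ (x + 1) - φ x) / (x + 1 - x), ?_⟩
  rintro s ⟨y, hy, rfl⟩
  exact slope_anti3 hφ hy (lt_add_one x)

lemma superg_le_slope {x y : ℝ} (h : y < x) :
    superg φ x ≤ (φ x - φ y) / (x - y) :=
  csInf_le (superg_bddBelow hφ x) ⟨y, h, rfl⟩

lemma slope_le_superg {x z : ℝ} (h : x < z) :
    (φ z - φ x) / (z - x) ≤ superg φ x := by
  refine le_csInf ⟨(φ x - φ (x - 1)) / (x - (x - 1)), ⟨x - 1, by simp, rfl⟩⟩ ?_
  rintro s ⟨y, hy, rfl⟩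
  exact slope_anti3 hφ hy h

lemma superg_spec (x z : ℝ) : φ z ≤ φ x + superg φ x * (z - x) := by
  rcases lt_trichotomy z x with h | h | h
  · have h1 := superg_le_slope hφ h
    rw [le_div_iff₀ (by linarith)] at h1
    nlinarith
  · simp [h]
  · have h1 := slope_le_superg hφ h
    rw [div_le_iff₀ (by linarith)] at h1
    nlinarith

lemma superg_antitone : Antitone (superg φ) := by
  intro a b hab
  rcases eq_or_lt_of_le hab with rfl | h
  · exact le_refl _
  · exact le_trans (superg_le_slope hφ h) (slope_le_superg hφ h)

omit hφ in
lemma superg_nonneg (hmono : Monotone φ) (x : ℝ) : 0 ≤ superg φ x := by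
  refine le_csInf ⟨(φ x - φ (x - 1)) / (x - (x - 1)), ⟨x - 1, by simp, rfl⟩⟩ ?_
  rintro s ⟨y, hy, rfl⟩
  rw [Set.mem_Iio] at hy
  exact div_nonneg (by have := hmono hy.le; linarith) (by linarith)

end superg

/-- Separation by a supergradient density: if `E[φ(X)] < B`, there is a probability
measure `Q ≪ P` with bounded density and a gap `ε > 0` separating `X` from the set
`{Y ∈ L^p : E[φ(Y)] ≥ B}` in the sense of `Q`-expectations. -/
lemma exists_sep_measure {Ω : Type*} [MeasurableSpace Ω] (P : Measure Ω) [IsProbabilityMeasure P]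
    (p p' : ℝ≥0∞) (hp : 1 ≤ p)
    (φ : ℝ → ℝ) (hφ_mono : Monotone φ) (hφ_conc : ConcaveOn ℝ Set.univ φ)
    (hint : ∀ Y : Ω → ℝ, MemLp Y p P → Integrable (fun ω => φ (Y ω)) P)
    (X : Ω → ℝ) (hX : MemLp X p P) (B : ℝ) (hXB : ∫ ω, φ (X ω) ∂P < B) :
    ∃ Q : Measure Ω, (IsProbabilityMeasure Q ∧ Q ≪ P ∧
        MemLp (fun ω => (Q.rnDeriv P ω).toReal) p' P) ∧
      ∃ ε : ℝ, 0 < ε ∧ ∀ Y : Ω → ℝ, MemLp Y p P → B ≤ ∫ ω, φ (Y ω) ∂P →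
        ∫ ω, -Y ω ∂Q ≤ ∫ ω, -X ω ∂Q - ε := by
  classical
  -- measurable representative of X
  obtain ⟨Xm, hXm_meas, hXe⟩ : ∃ Xm : Ω → ℝ, Measurable Xm ∧ X =ᵐ[P] Xm :=
    ⟨hX.1.mk X, hX.1.measurable_mk, hX.1.ae_eq_mk⟩
  have hXm_mem : MemLp Xm p P := hX.ae_eq hXe
  have hXm_int : Integrable Xm P := hXm_mem.integrable hp
  -- truncations
  have hXk_meas : ∀ n : ℕ, Measurable (fun ω => max (Xm ω) (-(n : ℝ))) :=
    fun n => hXm_meas.max measurable_const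
  have hXk_mem : ∀ n : ℕ, MemLp (fun ω => max (Xm ω) (-(n : ℝ))) p P := by
    intro n
    refine MemLp.mono' ((hXm_mem.norm).add (memLp_const (n : ℝ)))
      ((hXk_meas n).aestronglyMeasurable) (ae_of_all _ fun ω => ?_)
    have hn : (0:ℝ) ≤ n := Nat.cast_nonneg n
    have h1 := le_abs_self (Xm ω)
    have h2 := neg_abs_le (Xm ω)
    simp only [Pi.add_apply, Real.norm_eq_abs]
    rw [abs_le]
    refine ⟨?_, max_le (by linarith) (by linarith)⟩
    have h3 := le_max_left (Xm ω) (-(n : ℝ))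
    linarith
  -- choose a truncation level with integral still below B
  have hXmB : ∫ ω, φ (Xm ω) ∂P < B := by
    rwa [integral_congr_ae (hXe.mono fun ω hω => by rw [hω])] at hXB
  have hX0_mem : MemLp (fun ω => max (Xm ω) (-(0 : ℕ) : ℝ)) p P := hXk_mem 0
  have htend : Filter.Tendsto (fun n : ℕ => ∫ ω, φ (max (Xm ω) (-(n : ℝ))) ∂P)
      Filter.atTop (nhds (∫ ω, φ (Xm ω) ∂P)) := by
    refine tendsto_integral_of_dominated_convergence
      (fun ω => |φ (Xm ω)| + |φ (max (Xm ω) 0)|)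
      (fun n => (hint _ (hXk_mem n)).aestronglyMeasurable)
      (((hint _ hXm_mem).abs).add ((hint _ (by simpa using hXk_mem 0)).abs))
      (fun n => ae_of_all _ fun ω => ?_) (ae_of_all _ fun ω => ?_)
    · have h1 : φ (Xm ω) ≤ φ (max (Xm ω) (-(n : ℝ))) := hφ_mono (le_max_left _ _)
      have h2 : φ (max (Xm ω) (-(n : ℝ))) ≤ φ (max (Xm ω) 0) :=
        hφ_mono (max_le_max (le_refl _) (neg_nonpos.mpr (Nat.cast_nonneg n)))
      rw [Real.norm_eq_abs]
      have := le_abs_self (φ (max (Xm ω) 0))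
      have := neg_abs_le (φ (Xm ω))
      have := abs_nonneg (φ (Xm ω)); have := abs_nonneg (φ (max (Xm ω) 0))
      rw [abs_le]; constructor <;> linarith
    · obtain ⟨N, hN⟩ := exists_nat_ge (-(Xm ω))
      refine Filter.Tendsto.congr' ?_ tendsto_const_nhds
      filter_upwards [Filter.eventually_ge_atTop N] with n hn
      have : -(n : ℝ) ≤ Xm ω := by
        have : (N : ℝ) ≤ n := Nat.cast_le.mpr hn
        linarith
      rw [max_eq_left this]
  obtain ⟨n, hn⟩ := (htend.eventually_lt_const hXmB).exists
  -- the truncated variable and the supergradient weight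
  set Z : Ω → ℝ := fun ω => max (Xm ω) (-(n : ℝ)) with hZ_def
  have hZ_meas : Measurable Z := hXk_meas n
  have hZ_mem : MemLp Z p P := hXk_mem n
  have hZ_int : Integrable Z P := hZ_mem.integrable hp
  have hZB : ∫ ω, φ (Z ω) ∂P < B := hn
  set δ : ℝ := B - ∫ ω, φ (Z ω) ∂P with hδ_def
  have hδ : 0 < δ := by rw [hδ_def]; linarith
  set g : Ω → ℝ := fun ω => superg φ (Z ω) with hg_def
  have hg_meas : Measurable g := (superg_antitone hφ_conc).measurable.comp hZ_meas
  have hg_nonneg : ∀ ω, 0 ≤ g ω := fun ω => superg_nonneg hφ_mono _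
  set M : ℝ := superg φ (-(n : ℝ)) with hM_def
  have hg_bdd : ∀ ω, g ω ≤ M := fun ω => superg_antitone hφ_conc (le_max_right _ _)
  have hg_int : Integrable g P := by
    refine Integrable.mono' (integrable_const M) hg_meas.aestronglyMeasurable
      (ae_of_all _ fun ω => ?_)
    rw [Real.norm_eq_abs, abs_of_nonneg (hg_nonneg ω)]; exact hg_bdd ω
  have hkey : ∀ ω (y : ℝ), φ y ≤ φ (Z ω) + g ω * (y - Z ω) :=
    fun ω y => superg_spec hφ_conc (Z ω) y
  have hmul_int : ∀ Y : Ω → ℝ, Integrable Y P → Integrable (fun ω => g ω * Y ω) P :=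
    fun Y hY => hY.bdd_mul (c := M) hg_meas.aestronglyMeasurable
      (ae_of_all _ fun ω => by rw [Real.norm_eq_abs, abs_of_nonneg (hg_nonneg ω)]; exact hg_bdd ω)
  have hgZ_int : Integrable (fun ω => g ω * Z ω) P := hmul_int Z hZ_int
  -- separation inequality in terms of P
  have hsep : ∀ Y : Ω → ℝ, MemLp Y p P → B ≤ ∫ ω, φ (Y ω) ∂P →
      ∫ ω, g ω * Z ω ∂P + δ ≤ ∫ ω, g ω * Y ω ∂P := by
    intro Y hY hBY
    have hY_int : Integrable Y P := hY.integrable hp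
    have hgY_int : Integrable (fun ω => g ω * Y ω) P := hmul_int Y hY_int
    have h1 : ∫ ω, φ (Y ω) ∂P ≤
        ∫ ω, (φ (Z ω) + g ω * Y ω - g ω * Z ω) ∂P := by
      have hint1 : Integrable (fun ω => φ (Z ω) + g ω * Y ω) P :=
        (hint Z hZ_mem).add hgY_int
      refine integral_mono (hint Y hY) (hint1.sub hgZ_int) fun ω => ?_
      have := hkey ω (Y ω)
      simp only
      nlinarith [this]
    have hint1 : Integrable (fun ω => φ (Z ω) + g ω * Y ω) P :=
      (hint Z hZ_mem).add hgY_int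
    rw [integral_sub hint1 hgZ_int, integral_add (hint Z hZ_mem) hgY_int] at h1
    rw [hδ_def]; linarith
  rcases eq_or_lt_of_le (integral_nonneg (f := g) hg_nonneg) with hc0 | hc
  -- degenerate case : the weight vanishes a.e., so no Y satisfies the constraint
  · have hg0 : g =ᵐ[P] 0 :=
      (integral_eq_zero_iff_of_nonneg hg_nonneg hg_int).mp hc0.symm
    refine ⟨P, ⟨inferInstance, Measure.AbsolutelyContinuous.rfl, ?_⟩, 1, one_pos, ?_⟩
    · refine (memLp_const (1 : ℝ)).ae_eq ?_
      filter_upwards [Measure.rnDeriv_self P] with ω hω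
      rw [hω]; simp
    · intro Y hY hBY
      exfalso
      have hgZ0 : ∫ ω, g ω * Z ω ∂P = 0 := by
        rw [integral_eq_zero_iff_of_nonneg_ae ?_ hgZ_int]
        · filter_upwards [hg0] with ω hω
          simp only [Pi.zero_apply] at hω; simp [hω]
        · filter_upwards [hg0] with ω hω
          simp only [Pi.zero_apply] at hω; simp [hω]
      have hgY0 : ∫ ω, g ω * Y ω ∂P = 0 := by
        rw [integral_eq_zero_iff_of_nonneg_ae ?_ (hmul_int Y (hY.integrable hp))]
        · filter_upwards [hg0] with ω hω
          simp only [Pi.zero_apply] at hω; simp [hω]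
        · filter_upwards [hg0] with ω hω
          simp only [Pi.zero_apply] at hω; simp [hω]
      have := hsep Y hY hBY
      rw [hgZ0, hgY0] at this
      linarith
  -- main case : normalize the weight into a probability density
  · set c : ℝ := ∫ ω, g ω ∂P with hc_def
    have hc' : c ≠ 0 := ne_of_gt hc
    set w : Ω → ℝ≥0 := fun ω => Real.toNNReal (g ω / c) with hw_def
    have hw_meas : Measurable w := (hg_meas.div_const c).real_toNNReal
    set Q : Measure Ω := P.withDensity (fun ω => (w ω : ℝ≥0∞)) with hQ_def
    have hQint : ∀ h : Ω → ℝ, ∫ ω, h ω ∂Q = ∫ ω, (g ω / c) * h ω ∂P := by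
      intro h
      rw [hQ_def, integral_withDensity_eq_integral_smul hw_meas h]
      refine integral_congr_ae (ae_of_all _ fun ω => ?_)
      rw [hw_def]
      simp only [NNReal.smul_def, smul_eq_mul]
      rw [Real.coe_toNNReal _ (div_nonneg (hg_nonneg ω) hc.le)]
    have hQprob : IsProbabilityMeasure Q := by
      constructor
      rw [hQ_def, withDensity_apply _ MeasurableSet.univ, setLIntegral_univ]
      have h1 : ∫⁻ ω, ((w ω : ℝ≥0∞)) ∂P = ∫⁻ ω, ENNReal.ofReal (g ω / c) ∂P :=
        lintegral_congr fun ω => rfl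
      rw [h1, ← ofReal_integral_eq_lintegral_ofReal (hg_int.div_const c)
        (ae_of_all _ fun ω => div_nonneg (hg_nonneg ω) hc.le)]
      have h2 : ∫ ω, g ω / c ∂P = (∫ ω, g ω ∂P) / c := integral_div c g
      rw [h2, ← hc_def, div_self hc', ENNReal.ofReal_one]
    have hrn : Q.rnDeriv P =ᵐ[P] fun ω => ((w ω : ℝ≥0∞)) := by
      rw [hQ_def]
      exact Measure.rnDeriv_withDensity P hw_meas.coe_nnreal_ennreal
    have hM_nonneg : 0 ≤ M := superg_nonneg hφ_mono _
    have hdens_mem : MemLp (fun ω => (Q.rnDeriv P ω).toReal) p' P := by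
      refine MemLp.of_bound
        ((Measure.measurable_rnDeriv Q P).ennreal_toReal).aestronglyMeasurable
        (M / c) ?_
      filter_upwards [hrn] with ω hω
      rw [hω, ENNReal.coe_toReal, hw_def]
      dsimp only
      rw [Real.coe_toNNReal']
      rw [Real.norm_eq_abs, abs_of_nonneg (le_max_right _ _)]
      exact max_le ((div_le_div_iff_of_pos_right hc).mpr (hg_bdd ω)) (div_nonneg hM_nonneg hc.le)
    refine ⟨Q, ⟨hQprob, by rw [hQ_def]; exact withDensity_absolutelyContinuous P _,
      hdens_mem⟩, δ / c, div_pos hδ hc, ?_⟩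
    intro Y hY hBY
    have hY_int : Integrable Y P := hY.integrable hp
    have h2 := hsep Y hY hBY
    have hgX_int : Integrable (fun ω => g ω * X ω) P := hmul_int X (hX.integrable hp)
    have hZX : ∀ ω, Xm ω ≤ Z ω := fun ω => le_max_left _ _
    have h3 : ∫ ω, g ω * X ω ∂P ≤ ∫ ω, g ω * Z ω ∂P := by
      refine integral_mono_ae hgX_int hgZ_int ?_
      filter_upwards [hXe] with ω hω
      rw [hω]
      exact mul_le_mul_of_nonneg_left (hZX ω) (hg_nonneg ω)
    have hQY : ∫ ω, -Y ω ∂Q = -(1/c) * ∫ ω, g ω * Y ω ∂P := by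
      rw [hQint (fun ω => -Y ω)]
      rw [show (fun ω => (g ω / c) * -Y ω) = fun ω => -(1/c) * (g ω * Y ω) from
        funext fun ω => by ring]
      rw [integral_const_mul]
    have hQX : ∫ ω, -X ω ∂Q = -(1/c) * ∫ ω, g ω * X ω ∂P := by
      rw [hQint (fun ω => -X ω)]
      rw [show (fun ω => (g ω / c) * -X ω) = fun ω => -(1/c) * (g ω * X ω) from
        funext fun ω => by ring]
      rw [integral_const_mul]
    rw [hQY, hQX]
    have hcinv : (0:ℝ) ≤ 1/c := le_of_lt (one_div_pos.mpr hc)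
    have e1 := mul_le_mul_of_nonneg_left h2 hcinv
    have e2 := mul_le_mul_of_nonneg_left h3 hcinv
    have e3 : (1/c) * (∫ ω, g ω * Z ω ∂P + δ) =
        (1/c) * ∫ ω, g ω * Z ω ∂P + δ/c := by ring
    rw [e3] at e1
    linarith


/-- Acceptance set at level `m` of the generalized shortfall:
`𝒜^m = {Y ∈ L^p : E[U(f(Y,m))] ≥ B}`. -/
def genShortfallAccSet {Ω : Type*} [MeasurableSpace Ω] (P : Measure Ω) (p : ℝ≥0∞)
    (U : ℝ → ℝ) (f : ℝ → ℝ → ℝ) (B : ℝ) (m : ℝ) : Set (Ω → ℝ) :=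
  {Y | MemLp Y p P ∧ B ≤ ∫ ω, U (f (Y ω) m) ∂P}

/-- The generalized shortfall risk measure
`ρ^{U,f,B}(X) = inf {m ∈ ℝ : X ∈ 𝒜^m}`, infimum taken in the extended reals
(so `inf ∅ = +∞`). -/
noncomputable def genShortfall {Ω : Type*} [MeasurableSpace Ω] (P : Measure Ω) (p : ℝ≥0∞)
    (U : ℝ → ℝ) (f : ℝ → ℝ → ℝ) (B : ℝ) (X : Ω → ℝ) : EReal :=
  sInf ((fun m : ℝ => (m : EReal)) ''
    {m : ℝ | X ∈ genShortfallAccSet P p U f B m})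

/-- Dual representation of the generalized shortfall risk measure:
`ρ^{U,f,B}(X) = sup_{Q ∈ 𝒬} R(E_Q[-X], Q)` where
`R(x,Q) = inf{m : sup_{Y ∈ 𝒜^m} E_Q[-Y] ≥ x}` and `𝒬` is the set of probability
measures `Q ≪ P` with density in `L^{p'}`. -/
theorem genShortfall_dual_representation
    {Ω : Type*} [MeasurableSpace Ω] (P : Measure Ω) [IsProbabilityMeasure P]
    (p p' : ℝ≥0∞) (hp : 1 ≤ p) (hp_ne : p ≠ ⊤) (hconj : 1 / p + 1 / p' = 1)
    (U : ℝ → ℝ) (hU_mono : Monotone U) (hU_conc : ConcaveOn ℝ Set.univ U)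
    (hU_nc : ∃ x y : ℝ, U x ≠ U y) (B : ℝ)
    (f : ℝ → ℝ → ℝ)
    (hf_m : ∀ y : ℝ, StrictMono (fun m => f y m))
    (hf_y : ∀ m : ℝ, StrictMono (fun y => f y m))
    (hUf_conc : ∀ m : ℝ, ConcaveOn ℝ Set.univ (fun y => U (f y m)))
    (hint : ∀ Y : Ω → ℝ, MemLp Y p P → ∀ m : ℝ,
      Integrable (fun ω => U (f (Y ω) m)) P)
    (X : Ω → ℝ) (hX : MemLp X p P) :
    genShortfall P p U f B X =
      ⨆ Q ∈ {Q : Measure Ω | IsProbabilityMeasure Q ∧ Q ≪ P ∧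
        MemLp (fun ω => (Q.rnDeriv P ω).toReal) p' P},
        sInf ((fun m : ℝ => (m : EReal)) ''
          {m : ℝ | ((∫ ω, -X ω ∂Q : ℝ) : EReal) ≤
            ⨆ Y ∈ genShortfallAccSet P p U f B m, ((∫ ω, -Y ω ∂Q : ℝ) : EReal)}) := by
  have hA_mono : ∀ {m m' : ℝ}, m ≤ m' →
      genShortfallAccSet P p U f B m ⊆ genShortfallAccSet P p U f B m' := by
    intro m m' hmm' Y hY
    refine ⟨hY.1, le_trans hY.2 (integral_mono (hint Y hY.1 m) (hint Y hY.1 m')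
      fun ω => hU_mono ((hf_m (Y ω)).monotone hmm'))⟩
  refine le_antisymm ?_ ?_
  · -- ρ ≤ sup
    by_contra hcon
    push_neg at hcon
    obtain ⟨r, hr1, hr2⟩ := EReal.lt_iff_exists_real_btwn.mp hcon
    have hrS : X ∉ genShortfallAccSet P p U f B r := by
      intro h
      exact absurd (sInf_le ⟨r, h, rfl⟩ :
        genShortfall P p U f B X ≤ (r : EReal)) (not_le.mpr hr2)
    have hXB : ∫ ω, U (f (X ω) r) ∂P < B := by
      by_contra h
      push_neg at h
      exact hrS ⟨hX, h⟩
    obtain ⟨Q, hQ, ε, hε, hQsep⟩ :=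
      exists_sep_measure P p p' hp (fun y => U (f y r))
        (fun a b hab => hU_mono ((hf_y r).monotone hab)) (hUf_conc r)
        (fun Y hY => hint Y hY r) X hX B hXB
    have hrT : (r : EReal) ≤
        ⨆ Q ∈ {Q : Measure Ω | IsProbabilityMeasure Q ∧ Q ≪ P ∧
          MemLp (fun ω => (Q.rnDeriv P ω).toReal) p' P},
          sInf ((fun m : ℝ => (m : EReal)) ''
            {m : ℝ | ((∫ ω, -X ω ∂Q : ℝ) : EReal) ≤
              ⨆ Y ∈ genShortfallAccSet P p U f B m, ((∫ ω, -Y ω ∂Q : ℝ) : EReal)}) := by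
      refine le_trans ?_ (le_biSup _ hQ)
      refine le_sInf ?_
      rintro e ⟨m, hm, rfl⟩
      by_contra hlt
      push_neg at hlt
      have hmr : m ≤ r := le_of_lt (by exact_mod_cast hlt)
      have hsup : (⨆ Y ∈ genShortfallAccSet P p U f B m,
          ((∫ ω, -Y ω ∂Q : ℝ) : EReal)) ≤ ((∫ ω, -X ω ∂Q - ε : ℝ) : EReal) := by
        refine iSup₂_le fun Y hY => ?_
        have hY' := hA_mono hmr hY
        exact EReal.coe_le_coe_iff.mpr (hQsep Y hY'.1 hY'.2)
      have hfin := le_trans hm hsup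
      rw [EReal.coe_le_coe_iff] at hfin
      linarith
    exact absurd hrT (not_le.mpr hr1)
  · -- sup ≤ ρ
    refine iSup₂_le fun Q hQ => ?_
    refine sInf_le_sInf (Set.image_mono ?_)
    intro m hm
    have hm' : X ∈ genShortfallAccSet P p U f B m := hm
    exact le_biSup (fun Y : Ω → ℝ => ((∫ ω, -Y ω ∂Q : ℝ) : EReal)) hm'
end

section
/- Assume p ∈ [1, ∞), f(y,m) is increasing in m ∈ ℝ and increasing in y ∈ ℝ, and y ↦ U(f(y,m)) is concave (real-valued, hence continuous) for each m ∈ ℝ. Then the generalized shortfall risk measure ρ^{U,f,B} : L^p → ℝ ∪ {±∞} is lower semicontinuous with respect to the L^p-norm topology: for every sequence X_n → X in L^p, ρ^{U,f,B}(X) ≤ liminf_n ρ^{U,f,B}(X_n). -/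
open MeasureTheory Real
open scoped ENNReal

/-- A monotone concave function on `ℝ` is bounded above by an affine function
with nonnegative slope. -/
lemma affine_bound_of_concave_mono (g : ℝ → ℝ) (hm : Monotone g)
    (hc : ConcaveOn ℝ Set.univ g) (y : ℝ) :
    g y ≤ g 1 + (g 1 - g 0) * y := by
  have hb : g 0 ≤ g 1 := hm zero_le_one
  rcases le_or_gt y 0 with h0 | h0
  · have ht : (0:ℝ) < 1 - y := by linarith
    have ha1 : (0:ℝ) ≤ 1 / (1 - y) := by positivity
    have ha2 : (0:ℝ) ≤ -y / (1 - y) := div_nonneg (by linarith) ht.le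
    have hab : 1 / (1 - y) + -y / (1 - y) = 1 := by field_simp; ring
    have key := hc.2 (Set.mem_univ y) (Set.mem_univ (1:ℝ)) ha1 ha2 hab
    simp only [smul_eq_mul, mul_one] at key
    have harg : 1 / (1 - y) * y + -y / (1 - y) = 0 := by field_simp; ring
    rw [harg] at key
    rw [one_div_mul_eq_div, div_mul_eq_mul_div, ← add_div, div_le_iff₀ ht] at key
    nlinarith
  · rcases le_or_gt y 1 with h1 | h1
    · have := hm h1
      nlinarith
    · have hy : (0:ℝ) < y := by linarith
      have ha1 : (0:ℝ) ≤ (y - 1) / y := div_nonneg (by linarith) hy.le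
      have ha2 : (0:ℝ) ≤ 1 / y := by positivity
      have hab : (y - 1) / y + 1 / y = 1 := by field_simp; ring
      have key := hc.2 (Set.mem_univ (0:ℝ)) (Set.mem_univ y) ha1 ha2 hab
      simp only [smul_eq_mul, mul_zero, zero_add] at key
      have harg : 1 / y * y = 1 := by field_simp
      rw [harg] at key
      rw [div_mul_eq_mul_div, one_div_mul_eq_div, ← add_div, div_le_iff₀ hy] at key
      nlinarith

/-- Key stability lemma: if `g` is monotone and concave, `Y n → Ylim` in `L^p`
and `B ≤ ∫ g (Y n)` for all `n`, then `B ≤ ∫ g Ylim`. -/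
lemma le_integral_of_tendsto_Lp {Ω : Type*} [MeasurableSpace Ω] (P : Measure Ω)
    [IsProbabilityMeasure P] (p : ℝ≥0∞) (hp : 1 ≤ p) (hp_ne : p ≠ ⊤)
    (g : ℝ → ℝ) (hm : Monotone g) (hc : ConcaveOn ℝ Set.univ g)
    (Y : ℕ → Ω → ℝ) (hY : ∀ n, MemLp (Y n) p P)
    (Ylim : Ω → ℝ) (hYlim : MemLp Ylim p P)
    (hconv : Filter.Tendsto (fun n => eLpNorm (Y n - Ylim) p P) Filter.atTop (nhds 0))
    (hint : ∀ n, Integrable (fun ω => g (Y n ω)) P)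
    (hintl : Integrable (fun ω => g (Ylim ω)) P)
    (B : ℝ) (hB : ∀ n, B ≤ ∫ ω, g (Y n ω) ∂P) :
    B ≤ ∫ ω, g (Ylim ω) ∂P := by
  have hp0 : p ≠ 0 := fun h => by simp [h] at hp
  -- a.e. convergent subsequence
  obtain ⟨ns, hns, hae⟩ :=
    (MeasureTheory.tendstoInMeasure_of_tendsto_eLpNorm_of_ne_top hp0 hp_ne
      (fun n => (hY n).aestronglyMeasurable) hYlim.aestronglyMeasurable
      hconv).exists_seq_tendsto_ae
  have hYint : ∀ n, Integrable (Y n) P := fun n => (hY n).integrable hp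
  have hYlimint : Integrable Ylim P := hYlim.integrable hp
  -- convergence of integrals of Y along the subsequence
  have hsubconv : Filter.Tendsto (fun i => eLpNorm (Y (ns i) - Ylim) p P)
      Filter.atTop (nhds 0) := hconv.comp hns.tendsto_atTop
  have hL1 : Filter.Tendsto (fun i => ∫⁻ x, ‖Y (ns i) x - Ylim x‖₊ ∂P)
      Filter.atTop (nhds 0) := by
    refine tendsto_of_tendsto_of_tendsto_of_le_of_le tendsto_const_nhds hsubconv
      (fun i => zero_le) (fun i => ?_)
    have e1 : ∫⁻ x, ‖Y (ns i) x - Ylim x‖₊ ∂P = eLpNorm (Y (ns i) - Ylim) 1 P :=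
      (eLpNorm_one_eq_lintegral_enorm (f := Y (ns i) - Ylim)).symm
    rw [e1]
    exact eLpNorm_le_eLpNorm_of_exponent_le hp
      ((hY (ns i)).aestronglyMeasurable.sub hYlim.aestronglyMeasurable)
  have hIY : Filter.Tendsto (fun i => ∫ ω, Y (ns i) ω ∂P) Filter.atTop
      (nhds (∫ ω, Ylim ω ∂P)) :=
    tendsto_integral_of_L1 Ylim hYlimint.aestronglyMeasurable
      (Filter.Eventually.of_forall fun i => hYint (ns i)) hL1
  -- affine bound
  set a : ℝ := g 1 with ha_def
  set b : ℝ := g 1 - g 0 with hb_def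
  have hb0 : 0 ≤ b := by have := hm (zero_le_one (α := ℝ)); simp [hb_def]; linarith
  have hbnd : ∀ y, g y ≤ a + b * y := affine_bound_of_concave_mono g hm hc
  -- the nonnegative functions
  set h : ℕ → Ω → ℝ := fun i ω => a + b * Y (ns i) ω - g (Y (ns i) ω) with hh_def
  set hl : Ω → ℝ := fun ω => a + b * Ylim ω - g (Ylim ω) with hl_def
  have hh_nonneg : ∀ i ω, 0 ≤ h i ω := fun i ω => by
    have := hbnd (Y (ns i) ω); simp [hh_def]; linarith
  have hl_nonneg : ∀ ω, 0 ≤ hl ω := fun ω => by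
    have := hbnd (Ylim ω); simp [hl_def]; linarith
  have hh_int : ∀ i, Integrable (h i) P := fun i =>
    ((integrable_const a).add ((hYint (ns i)).const_mul b)).sub (hint (ns i))
  have hl_int : Integrable hl P :=
    ((integrable_const a).add (hYlimint.const_mul b)).sub hintl
  have comp_eq : ∀ (W G : Ω → ℝ), Integrable W P → Integrable G P →
      ∫ ω, (a + b * W ω - G ω) ∂P = (a + b * ∫ ω, W ω ∂P) - ∫ ω, G ω ∂P := by
    intro W G hW hG
    have h1 : Integrable (fun ω => a + b * W ω) P :=
      (integrable_const a).add (hW.const_mul b)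
    rw [integral_sub h1 hG, integral_add (integrable_const a) (hW.const_mul b),
      integral_const, integral_const_mul]
    simp
  have hh_eq : ∀ i, ∫ ω, h i ω ∂P
      = (a + b * ∫ ω, Y (ns i) ω ∂P) - ∫ ω, g (Y (ns i) ω) ∂P := fun i =>
    comp_eq _ _ (hYint (ns i)) (hint (ns i))
  have hl_eq : ∫ ω, hl ω ∂P = (a + b * ∫ ω, Ylim ω ∂P) - ∫ ω, g (Ylim ω) ∂P :=
    comp_eq _ _ hYlimint hintl
  -- a.e. convergence of h i to hl
  have hgc : Continuous g := by
    have := hc.continuousOn isOpen_univ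
    exact continuousOn_univ.mp this
  have haeh : ∀ᵐ ω ∂P, Filter.Tendsto (fun i => h i ω) Filter.atTop (nhds (hl ω)) := by
    filter_upwards [hae] with ω hω
    exact (tendsto_const_nhds.add (hω.const_mul b)).sub ((hgc.tendsto _).comp hω)
  -- Fatou
  have fatou := lintegral_liminf_le'
    (f := fun i ω => ENNReal.ofReal (h i ω)) (u := Filter.atTop)
    (fun i => ENNReal.measurable_ofReal.comp_aemeasurable (hh_int i).aemeasurable) (μ := P)
  have hLHS : ∫⁻ ω, Filter.liminf (fun i => ENNReal.ofReal (h i ω)) Filter.atTop ∂P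
      = ∫⁻ ω, ENNReal.ofReal (hl ω) ∂P := by
    refine lintegral_congr_ae ?_
    filter_upwards [haeh] with ω hω
    exact (ENNReal.tendsto_ofReal hω).liminf_eq
  have hterm : ∀ i, ∫⁻ ω, ENNReal.ofReal (h i ω) ∂P = ENNReal.ofReal (∫ ω, h i ω ∂P) :=
    fun i => (ofReal_integral_eq_lintegral_ofReal (hh_int i)
      (Filter.Eventually.of_forall (hh_nonneg i))).symm
  have hliml : ENNReal.ofReal (∫ ω, hl ω ∂P) = ∫⁻ ω, ENNReal.ofReal (hl ω) ∂P :=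
    ofReal_integral_eq_lintegral_ofReal hl_int (Filter.Eventually.of_forall hl_nonneg)
  rw [hLHS] at fatou
  rw [← hliml] at fatou
  -- bound the terms
  set c : ℕ → ℝ := fun i => a + b * ∫ ω, Y (ns i) ω ∂P - B with hc_def
  have hcle : ∀ i, ∫ ω, h i ω ∂P ≤ c i := by
    intro i
    rw [hh_eq i]
    have := hB (ns i)
    simp only [hc_def]
    linarith
  have hclim : Filter.Tendsto c Filter.atTop
      (nhds (a + b * ∫ ω, Ylim ω ∂P - B)) :=
    (tendsto_const_nhds.add (hIY.const_mul b)).sub tendsto_const_nhds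
  have hstep : Filter.liminf (fun i => ∫⁻ ω, ENNReal.ofReal (h i ω) ∂P) Filter.atTop
      ≤ ENNReal.ofReal (a + b * ∫ ω, Ylim ω ∂P - B) := by
    have h1 : Filter.liminf (fun i => ∫⁻ ω, ENNReal.ofReal (h i ω) ∂P) Filter.atTop
        ≤ Filter.liminf (fun i => ENNReal.ofReal (c i)) Filter.atTop := by
      refine Filter.liminf_le_liminf (Filter.Eventually.of_forall fun i => ?_)
      rw [hterm i]
      exact ENNReal.ofReal_le_ofReal (hcle i)
    have h2 : Filter.liminf (fun i => ENNReal.ofReal (c i)) Filter.atTop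
        = ENNReal.ofReal (a + b * ∫ ω, Ylim ω ∂P - B) :=
      (ENNReal.tendsto_ofReal hclim).liminf_eq
    exact h1.trans h2.le
  have hmain : ENNReal.ofReal (∫ ω, hl ω ∂P)
      ≤ ENNReal.ofReal (a + b * ∫ ω, Ylim ω ∂P - B) := fatou.trans hstep
  have hc0 : 0 ≤ a + b * ∫ ω, Ylim ω ∂P - B := by
    refine ge_of_tendsto' hclim fun i => ?_
    exact le_trans (integral_nonneg (hh_nonneg i)) (hcle i)
  have hfin : ∫ ω, hl ω ∂P ≤ a + b * ∫ ω, Ylim ω ∂P - B :=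
    (ENNReal.ofReal_le_ofReal_iff hc0).mp hmain
  rw [hl_eq] at hfin
  linarith

/-- Lower semicontinuity of the generalized shortfall risk measure with respect to
the `L^p`-norm topology: if `X_n → X` in `L^p`, then
`ρ^{U,f,B}(X) ≤ liminf_n ρ^{U,f,B}(X_n)`. -/
theorem genShortfall_lowerSemicontinuous
    {Ω : Type*} [MeasurableSpace Ω] (P : Measure Ω) [IsProbabilityMeasure P]
    (p : ℝ≥0∞) (hp : 1 ≤ p) (hp_ne : p ≠ ⊤)
    (U : ℝ → ℝ) (hU_mono : Monotone U) (hU_conc : ConcaveOn ℝ Set.univ U)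
    (hU_nc : ∃ x y : ℝ, U x ≠ U y) (B : ℝ)
    (f : ℝ → ℝ → ℝ)
    (hf_m : ∀ y : ℝ, StrictMono (fun m => f y m))
    (hf_y : ∀ m : ℝ, StrictMono (fun y => f y m))
    (hUf_conc : ∀ m : ℝ, ConcaveOn ℝ Set.univ (fun y => U (f y m)))
    (hint : ∀ Y : Ω → ℝ, MemLp Y p P → ∀ m : ℝ,
      Integrable (fun ω => U (f (Y ω) m)) P)
    (X : ℕ → Ω → ℝ) (hX : ∀ n, MemLp (X n) p P)
    (Xlim : Ω → ℝ) (hXlim : MemLp Xlim p P)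
    (hconv : Filter.Tendsto (fun n => eLpNorm (X n - Xlim) p P) Filter.atTop (nhds 0)) :
    genShortfall P p U f B Xlim ≤
      Filter.liminf (fun n => genShortfall P p U f B (X n)) Filter.atTop := by
  apply EReal.le_of_forall_lt_iff_le.mp
  intro z hz
  -- frequently, the shortfall of `X n` is below `z`
  have hfreq : ∃ᶠ n in Filter.atTop, genShortfall P p U f B (X n) < (z : EReal) :=
    Filter.frequently_lt_of_liminf_lt (by isBoundedDefault) hz
  obtain ⟨ns, hns, hprop⟩ := Filter.extraction_of_frequently_atTop hfreq
  -- along the subsequence, `X (ns i)` is in the acceptance set at level `z`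
  have hacc : ∀ i, B ≤ ∫ ω, U (f (X (ns i) ω) z) ∂P := by
    intro i
    obtain ⟨e, he, helt⟩ := sInf_lt_iff.mp (hprop i)
    obtain ⟨m, hmS, rfl⟩ := he
    have hmz : m ≤ z := le_of_lt (EReal.coe_lt_coe_iff.mp helt)
    obtain ⟨hmem, hBle⟩ := hmS
    refine hBle.trans ?_
    refine integral_mono (hint _ hmem m) (hint _ hmem z) fun ω => ?_
    exact hU_mono ((hf_m (X (ns i) ω)).monotone hmz)
  -- pass to the limit
  have hlimacc : B ≤ ∫ ω, U (f (Xlim ω) z) ∂P := by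
    refine le_integral_of_tendsto_Lp P p hp hp_ne (fun y => U (f y z))
      (fun y₁ y₂ hle => hU_mono ((hf_y z).monotone hle)) (hUf_conc z)
      (fun i => X (ns i)) (fun i => hX (ns i)) Xlim hXlim
      (hconv.comp hns.tendsto_atTop)
      (fun i => hint (X (ns i)) (hX (ns i)) z) (hint Xlim hXlim z) B hacc
  exact sInf_le ⟨z, ⟨hXlim, hlimacc⟩, rfl⟩
end

section
/- Assume f(y,m) is non-decreasing in m ∈ ℝ and non-decreasing in y ∈ ℝ, and y ↦ U(f(y,m)) is concave for each m ∈ ℝ. Then the generalized shortfall risk measure ρ^{U,f,B} is quasi-convex: for all X, Y ∈ L^p and λ ∈ [0,1], ρ^{U,f,B}(λX + (1−λ)Y) ≤ max{ ρ^{U,f,B}(X), ρ^{U,f,B}(Y) } (inequality in the extended reals). -/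
open MeasureTheory Real
open scoped ENNReal

/-- Quasi-convexity of the generalized shortfall risk measure (inequality in the
extended reals). -/
theorem genShortfall_quasiconvex
    {Ω : Type*} [MeasurableSpace Ω] (P : Measure Ω) [IsProbabilityMeasure P]
    (p : ℝ≥0∞)
    (U : ℝ → ℝ) (hU_mono : Monotone U) (hU_conc : ConcaveOn ℝ Set.univ U)
    (hU_nc : ∃ x y : ℝ, U x ≠ U y) (B : ℝ)
    (f : ℝ → ℝ → ℝ)
    (hf_m : ∀ y : ℝ, Monotone (fun m => f y m))
    (hf_y : ∀ m : ℝ, Monotone (fun y => f y m))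
    (hUf_conc : ∀ m : ℝ, ConcaveOn ℝ Set.univ (fun y => U (f y m)))
    (hint : ∀ Y : Ω → ℝ, MemLp Y p P → ∀ m : ℝ,
      Integrable (fun ω => U (f (Y ω) m)) P)
    (X Y : Ω → ℝ) (hX : MemLp X p P) (hY : MemLp Y p P)
    (l : ℝ) (hl : l ∈ Set.Icc (0 : ℝ) 1) :
    genShortfall P p U f B (fun ω => l * X ω + (1 - l) * Y ω) ≤
      max (genShortfall P p U f B X) (genShortfall P p U f B Y) := by
  classical
  set Z : Ω → ℝ := fun ω => l * X ω + (1 - l) * Y ω with hZdef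
  obtain ⟨hl0, hl1⟩ := hl
  have hZ : MemLp Z p P := (hX.const_mul l).add (hY.const_mul (1 - l))
  -- monotonicity of acceptance in m
  have acc_mono : ∀ (W : Ω → ℝ), MemLp W p P → ∀ m₀ m : ℝ, m₀ ≤ m →
      W ∈ genShortfallAccSet P p U f B m₀ → W ∈ genShortfallAccSet P p U f B m := by
    intro W hW m₀ m hm hmem
    refine ⟨hW, hmem.2.trans ?_⟩
    refine integral_mono (hint W hW m₀) (hint W hW m) fun ω => ?_
    exact hU_mono (hf_m (W ω) hm)
  -- combination stays accepted
  have key : ∀ m : ℝ, X ∈ genShortfallAccSet P p U f B m →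
      Y ∈ genShortfallAccSet P p U f B m → Z ∈ genShortfallAccSet P p U f B m := by
    intro m hXm hYm
    refine ⟨hZ, ?_⟩
    have hpt : ∀ ω, l * U (f (X ω) m) + (1 - l) * U (f (Y ω) m) ≤ U (f (Z ω) m) := by
      intro ω
      have := (hUf_conc m).2 (Set.mem_univ (X ω)) (Set.mem_univ (Y ω)) hl0
        (sub_nonneg.mpr hl1) (add_sub_cancel l 1)
      simpa [smul_eq_mul] using this
    have hintZ := hint Z hZ m
    have hintc : Integrable (fun ω => l * U (f (X ω) m) + (1 - l) * U (f (Y ω) m)) P :=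
      ((hint X hX m).const_mul l).add ((hint Y hY m).const_mul (1 - l))
    have h1 : ∫ ω, (l * U (f (X ω) m) + (1 - l) * U (f (Y ω) m)) ∂P ≤
        ∫ ω, U (f (Z ω) m) ∂P := integral_mono hintc hintZ hpt
    have h2 : ∫ ω, (l * U (f (X ω) m) + (1 - l) * U (f (Y ω) m)) ∂P =
        l * ∫ ω, U (f (X ω) m) ∂P + (1 - l) * ∫ ω, U (f (Y ω) m) ∂P := by
      rw [integral_add ((hint X hX m).const_mul l) ((hint Y hY m).const_mul (1 - l)),
        integral_const_mul, integral_const_mul]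
    have h3 : B ≤ l * ∫ ω, U (f (X ω) m) ∂P + (1 - l) * ∫ ω, U (f (Y ω) m) ∂P := by
      nlinarith [hXm.2, hYm.2]
    linarith [h2 ▸ h1]
  rw [← EReal.le_of_forall_lt_iff_le]
  intro z hz
  have hzX : genShortfall P p U f B X < (z : EReal) := lt_of_le_of_lt (le_max_left _ _) hz
  have hzY : genShortfall P p U f B Y < (z : EReal) := lt_of_le_of_lt (le_max_right _ _) hz
  rw [genShortfall, sInf_lt_iff] at hzX hzY
  obtain ⟨_, ⟨mX, hmX, rfl⟩, hmXz⟩ := hzX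
  obtain ⟨_, ⟨mY, hmY, rfl⟩, hmYz⟩ := hzY
  set m : ℝ := max mX mY with hm
  have hXm := acc_mono X hX mX m (le_max_left _ _) hmX
  have hYm := acc_mono Y hY mY m (le_max_right _ _) hmY
  have hZm := key m hXm hYm
  have : genShortfall P p U f B Z ≤ (m : EReal) :=
    sInf_le ⟨m, hZm, rfl⟩
  refine this.trans ?_
  rw [EReal.coe_le_coe_iff]
  have hmXz' : mX ≤ z := le_of_lt (EReal.coe_lt_coe_iff.mp (by simpa using hmXz))
  have hmYz' : mY ≤ z := le_of_lt (EReal.coe_lt_coe_iff.mp (by simpa using hmYz))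
  exact max_le hmXz' hmYz'
end

section
/- Assume f(y,m) is non-decreasing in m ∈ ℝ and non-decreasing in y ∈ ℝ, and that (y,m) ↦ U(f(y,m)) is jointly concave on ℝ². Then the generalized shortfall risk measure ρ^{U,f,B} is convex: for all X, Y ∈ L^p with ρ^{U,f,B}(X) and ρ^{U,f,B}(Y) finite, and all λ ∈ [0,1], ρ^{U,f,B}(λX + (1−λ)Y) ≤ λ ρ^{U,f,B}(X) + (1−λ) ρ^{U,f,B}(Y). -/
open MeasureTheory Real
open scoped ENNReal

/-- Convexity of the generalized shortfall risk measure when `(y,m) ↦ U(f(y,m))`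
is jointly concave: for `X, Y` with finite (real) risk values `rX, rY`,
`ρ(λX+(1-λ)Y) ≤ λ rX + (1-λ) rY`. -/
theorem genShortfall_convex
    {Ω : Type*} [MeasurableSpace Ω] (P : Measure Ω) [IsProbabilityMeasure P]
    (p : ℝ≥0∞)
    (U : ℝ → ℝ) (hU_mono : Monotone U) (hU_conc : ConcaveOn ℝ Set.univ U)
    (hU_nc : ∃ x y : ℝ, U x ≠ U y) (B : ℝ)
    (f : ℝ → ℝ → ℝ)
    (hf_m : ∀ y : ℝ, Monotone (fun m => f y m))
    (hf_y : ∀ m : ℝ, Monotone (fun y => f y m))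
    (hUf_conc : ConcaveOn ℝ Set.univ (fun ym : ℝ × ℝ => U (f ym.1 ym.2)))
    (hint : ∀ Y : Ω → ℝ, MemLp Y p P → ∀ m : ℝ,
      Integrable (fun ω => U (f (Y ω) m)) P)
    (X Y : Ω → ℝ) (hX : MemLp X p P) (hY : MemLp Y p P)
    (rX rY : ℝ)
    (hrX : genShortfall P p U f B X = (rX : EReal))
    (hrY : genShortfall P p U f B Y = (rY : EReal))
    (l : ℝ) (hl : l ∈ Set.Icc (0 : ℝ) 1) :
    genShortfall P p U f B (fun ω => l * X ω + (1 - l) * Y ω) ≤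
      ((l * rX + (1 - l) * rY : ℝ) : EReal) := by
  obtain ⟨hl0, hl1⟩ := hl
  have hl1' : (0:ℝ) ≤ 1 - l := by linarith
  set Z : Ω → ℝ := fun ω => l * X ω + (1 - l) * Y ω with hZ
  have hZmem : MemLp Z p P := (hX.const_mul l).add (hY.const_mul (1 - l))
  -- key: if X ∈ 𝒜^{mX}, Y ∈ 𝒜^{mY}, then Z ∈ 𝒜^{l mX + (1-l) mY}
  have key : ∀ mX mY : ℝ, X ∈ genShortfallAccSet P p U f B mX →
      Y ∈ genShortfallAccSet P p U f B mY →
      Z ∈ genShortfallAccSet P p U f B (l * mX + (1 - l) * mY) := by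
    intro mX mY hmX hmY
    refine ⟨hZmem, ?_⟩
    have hptw : ∀ ω, l * U (f (X ω) mX) + (1 - l) * U (f (Y ω) mY) ≤
        U (f (Z ω) (l * mX + (1 - l) * mY)) := by
      intro ω
      have := hUf_conc.2 (Set.mem_univ (X ω, mX)) (Set.mem_univ (Y ω, mY))
        hl0 hl1' (by ring)
      simpa [Prod.smul_mk, smul_eq_mul] using this
    have hIX := hmX.1
    have hint1 := hint X hX mX
    have hint2 := hint Y hY mY
    have hintZ := hint Z hZmem (l * mX + (1 - l) * mY)
    have h1 : l * (∫ ω, U (f (X ω) mX) ∂P) + (1 - l) * (∫ ω, U (f (Y ω) mY) ∂P)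
        ≤ ∫ ω, U (f (Z ω) (l * mX + (1 - l) * mY)) ∂P := by
      have := integral_mono ((hint1.const_mul l).add (hint2.const_mul (1 - l)))
        hintZ hptw
      simpa [integral_add (hint1.const_mul l) (hint2.const_mul (1 - l)),
        MeasureTheory.integral_const_mul] using this
    have hB : B = l * B + (1 - l) * B := by ring
    calc B = l * B + (1 - l) * B := hB
      _ ≤ l * (∫ ω, U (f (X ω) mX) ∂P) + (1 - l) * (∫ ω, U (f (Y ω) mY) ∂P) := by
          gcongr
          · exact hmX.2
          · exact hmY.2
      _ ≤ _ := h1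
  -- ρ(Z) ≤ l mX + (1-l) mY for all such mX mY
  have step : ∀ mX mY : ℝ, X ∈ genShortfallAccSet P p U f B mX →
      Y ∈ genShortfallAccSet P p U f B mY →
      genShortfall P p U f B Z ≤ ((l * mX + (1 - l) * mY : ℝ) : EReal) := by
    intro mX mY hmX hmY
    exact sInf_le ⟨l * mX + (1 - l) * mY, key mX mY hmX hmY, rfl⟩
  -- now take infima
  set c : ℝ := l * rX + (1 - l) * rY with hc
  refine le_of_forall_gt_imp_ge_of_dense ?_
  intro a ha
  obtain ⟨d, hcd, hda⟩ := EReal.lt_iff_exists_real_btwn.mp ha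
  have hcd' : c < d := EReal.coe_lt_coe_iff.mp hcd
  set ε : ℝ := d - c with hε
  have hεpos : 0 < ε := by simp [hε]; linarith
  -- find mX < rX + ε, mY < rY + ε in resp. acceptance sets
  have hXlt : sInf ((fun m : ℝ => (m : EReal)) ''
      {m : ℝ | X ∈ genShortfallAccSet P p U f B m}) < ((rX + ε : ℝ) : EReal) := by
    rw [show sInf ((fun m : ℝ => (m : EReal)) ''
      {m : ℝ | X ∈ genShortfallAccSet P p U f B m}) = genShortfall P p U f B X from rfl, hrX]
    exact_mod_cast (by linarith : rX < rX + ε)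
  have hYlt : sInf ((fun m : ℝ => (m : EReal)) ''
      {m : ℝ | Y ∈ genShortfallAccSet P p U f B m}) < ((rY + ε : ℝ) : EReal) := by
    rw [show sInf ((fun m : ℝ => (m : EReal)) ''
      {m : ℝ | Y ∈ genShortfallAccSet P p U f B m}) = genShortfall P p U f B Y from rfl, hrY]
    exact_mod_cast (by linarith : rY < rY + ε)
  obtain ⟨_, ⟨mX, hmX, rfl⟩, hmXlt⟩ := sInf_lt_iff.mp hXlt
  obtain ⟨_, ⟨mY, hmY, rfl⟩, hmYlt⟩ := sInf_lt_iff.mp hYlt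
  have hmX' : mX < rX + ε := EReal.coe_lt_coe_iff.mp hmXlt
  have hmY' : mY < rY + ε := EReal.coe_lt_coe_iff.mp hmYlt
  have hle : l * mX + (1 - l) * mY ≤ d := by
    have : l * mX + (1 - l) * mY ≤ l * (rX + ε) + (1 - l) * (rY + ε) := by
      gcongr <;> linarith
    have h2 : l * (rX + ε) + (1 - l) * (rY + ε) = c + ε := by simp [hc]; ring
    simp [hε] at *; linarith
  calc genShortfall P p U f B Z ≤ ((l * mX + (1 - l) * mY : ℝ) : EReal) :=
        step mX mY hmX hmY
    _ ≤ (d : EReal) := by exact_mod_cast hle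
    _ ≤ a := le_of_lt hda
end

section
/- Assume f(y,m) is non-decreasing in m ∈ ℝ and non-decreasing in y ∈ ℝ, y ↦ U(f(y,m)) is concave for each m ∈ ℝ, and additionally f(y,k) ≤ f(y−m, k+m) for all y, k ∈ ℝ and all m > 0. Then the generalized shortfall risk measure ρ^{U,f,B} is cash subadditive: for every X ∈ L^p and every constant m ≥ 0, ρ^{U,f,B}(X + m) ≥ ρ^{U,f,B}(X) − m (inequality in the extended reals). -/
open MeasureTheory Real
open scoped ENNReal

/-- Cash subadditivity of the generalized shortfall risk measure under the
aggregator condition `f(y,k) ≤ f(y-m, k+m)` for `m > 0`: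
`ρ^{U,f,B}(X + m) ≥ ρ^{U,f,B}(X) - m` for every constant `m ≥ 0` (in the
extended reals). -/
theorem genShortfall_cashSubadditive
    {Ω : Type*} [MeasurableSpace Ω] (P : Measure Ω) [IsProbabilityMeasure P]
    (p : ℝ≥0∞)
    (U : ℝ → ℝ) (hU_mono : Monotone U) (hU_conc : ConcaveOn ℝ Set.univ U)
    (hU_nc : ∃ x y : ℝ, U x ≠ U y) (B : ℝ)
    (f : ℝ → ℝ → ℝ)
    (hf_m : ∀ y : ℝ, Monotone (fun m => f y m))
    (hf_y : ∀ m : ℝ, Monotone (fun y => f y m))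
    (hUf_conc : ∀ m : ℝ, ConcaveOn ℝ Set.univ (fun y => U (f y m)))
    (hf_csa : ∀ y k m : ℝ, 0 < m → f y k ≤ f (y - m) (k + m))
    (hint : ∀ Y : Ω → ℝ, MemLp Y p P → ∀ m : ℝ,
      Integrable (fun ω => U (f (Y ω) m)) P)
    (X : Ω → ℝ) (hX : MemLp X p P) (m : ℝ) (hm : 0 ≤ m) :
    genShortfall P p U f B X - (m : EReal) ≤
      genShortfall P p U f B (fun ω => X ω + m) := by
  apply le_sInf
  rintro x ⟨k, hk, rfl⟩
  obtain ⟨hmem, hB⟩ := hk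
  have key : B ≤ ∫ ω, U (f (X ω) (k + m)) ∂P := by
    refine hB.trans (integral_mono (hint _ hmem k) (hint X hX (k + m)) ?_)
    intro ω
    rcases eq_or_lt_of_le hm with h0 | hpos
    · simp [← h0]
    · have := hf_csa (X ω + m) k m hpos
      simpa using hU_mono this
  have hle : genShortfall P p U f B X ≤ ((k + m : ℝ) : EReal) :=
    sInf_le ⟨k + m, ⟨hX, key⟩, rfl⟩
  calc genShortfall P p U f B X - (m : EReal)
      ≤ ((k + m : ℝ) : EReal) - (m : EReal) := EReal.sub_le_sub hle le_rfl
    _ = (k : EReal) := by rw [← EReal.coe_sub]; norm_num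
end

section
/- Fix 0 ≤ t ≤ u ≤ T, β ≥ 0, and let X ∈ L^∞(𝓕_u). Let 0 < q₁ ≤ q₂ < 1 and real numbers α₀, α_{q₁}, α_{q₂}, α₁ with −1 ≤ α₀ ≤ α_{q₁} ≤ α_{q₂} ≤ α₁ (note α ≥ −1 ≥ 1/(q−1) for q ∈ (0,1), so all the generalized exponentials below are well defined). Then, almost surely, E[(X+β)⁻ + α₀ | 𝓕_t] ≤ ln_{q₁} E[exp_{q₁}((X+β)⁻ + α_{q₁}) | 𝓕_t] ≤ ln_{q₂} E[exp_{q₂}((X+β)⁻ + α_{q₂}) | 𝓕_t] ≤ ln E[exp((X+β)⁻ + α₁) | 𝓕_t]. In particular, the q-entropic risk measure on losses ρ^q_{tu}(X) = ln_q E[exp_q((X+β)⁻ + α_q) | 𝓕_t] is non-decreasing in q, and is bounded below by the conditional expectation ρ⁰_{tu}(X) = E[(X+β)⁻ + α₀ | 𝓕_t] and above by the classical entropic risk measure ρ¹_{tu}(X) = ln E[exp((X+β)⁻ + α₁) | 𝓕_t]. -/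
open MeasureTheory Real
open scoped ENNReal
open Set

/-- Tsallis generalized exponential `exp_q(x) = (1+(1-q)x)^{1/(1-q)}`. -/
noncomputable def expq (q x : ℝ) : ℝ := (1 + (1 - q) * x) ^ ((1 : ℝ) / (1 - q))

/-- Tsallis generalized logarithm `ln_q(x) = (x^{1-q} - 1)/(1-q)`. -/
noncomputable def lnq (q x : ℝ) : ℝ := (x ^ (1 - q) - 1) / (1 - q)

lemma lnq_expq {q x : ℝ} (hq : q < 1) (hx : 0 ≤ 1 + (1 - q) * x) :
    lnq q (expq q x) = x := by
  have hs : (0:ℝ) < 1 - q := by linarith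
  unfold lnq expq
  rw [← Real.rpow_mul hx, one_div_mul_cancel hs.ne', Real.rpow_one]
  field_simp
  ring

lemma expq_lnq {q x : ℝ} (hq : q < 1) (hx : 0 ≤ x) :
    expq q (lnq q x) = x := by
  have hs : (0:ℝ) < 1 - q := by linarith
  unfold lnq expq
  rw [mul_div_cancel₀ _ hs.ne', add_sub_cancel, ← Real.rpow_mul hx,
    mul_one_div_cancel hs.ne', Real.rpow_one]

lemma expq_nonneg {q x : ℝ} (hx : 0 ≤ 1 + (1 - q) * x) : 0 ≤ expq q x :=
  Real.rpow_nonneg hx _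

lemma expq_pos {q x : ℝ} (hx : 0 < 1 + (1 - q) * x) : 0 < expq q x :=
  Real.rpow_pos_of_pos hx _

lemma expq_mono {q x y : ℝ} (hq : q < 1) (hx : 0 ≤ 1 + (1 - q) * x) (hxy : x ≤ y) :
    expq q x ≤ expq q y := by
  have hs : (0:ℝ) < 1 - q := by linarith
  exact Real.rpow_le_rpow hx (by nlinarith) (by positivity)

lemma lnq_mono {q x y : ℝ} (hq : q < 1) (hx : 0 ≤ x) (hxy : x ≤ y) :
    lnq q x ≤ lnq q y := by
  have hs : (0:ℝ) < 1 - q := by linarith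
  unfold lnq
  gcongr

lemma tangent_of_monotone {a b : ℝ} {φ ψ : ℝ → ℝ}
    (hd : ∀ x ∈ Icc a b, HasDerivAt φ (ψ x) x)
    (hmono : MonotoneOn ψ (Icc a b)) :
    ∀ x ∈ Icc a b, ∀ y ∈ Icc a b, φ x + ψ x * (y - x) ≤ φ y := by
  intro x hx y hy
  have key : ∀ u v : ℝ, u ∈ Icc a b → v ∈ Icc a b → u ≤ v →
      φ u + ψ u * (v - u) ≤ φ v := by
    intro u v hu hv huv
    have hsub : Icc u v ⊆ Icc a b := Icc_subset_Icc hu.1 hv.2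
    have hg : MonotoneOn (fun t => φ t - ψ u * t) (Icc u v) := by
      apply monotoneOn_of_hasDerivWithinAt_nonneg (convex_Icc u v)
        (f' := fun t => ψ t - ψ u)
      · intro t ht
        exact ((hd t (hsub ht)).sub ((hasDerivAt_id t).const_mul (ψ u))).continuousAt.continuousWithinAt.congr
          (fun z _ => rfl) rfl
      · intro t ht
        rw [interior_Icc] at ht
        have := ((hd t (hsub (Ioo_subset_Icc_self ht))).sub
          ((hasDerivAt_id t).const_mul (ψ u))).hasDerivWithinAt (s := interior (Icc u v))
        rw [interior_Icc]
        rw [interior_Icc, mul_one] at this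
        exact this
      · intro t ht
        rw [interior_Icc] at ht
        have := hmono hu (hsub (Ioo_subset_Icc_self ht)) ht.1.le
        linarith
    have := hg (left_mem_Icc.2 huv) (right_mem_Icc.2 huv) huv
    simp only at this
    nlinarith
  rcases le_total x y with h | h
  · exact key x y hx hy h
  · have h2 : ∀ u v : ℝ, u ∈ Icc a b → v ∈ Icc a b → v ≤ u →
        φ u + ψ u * (v - u) ≤ φ v := by
      intro u v hu hv hvu
      have hsub : Icc v u ⊆ Icc a b := Icc_subset_Icc hv.1 hu.2
      have hg : AntitoneOn (fun t => φ t - ψ u * t) (Icc v u) := by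
        apply antitoneOn_of_hasDerivWithinAt_nonpos (convex_Icc v u)
          (f' := fun t => ψ t - ψ u)
        · intro t ht
          exact ((hd t (hsub ht)).sub ((hasDerivAt_id t).const_mul (ψ u))).continuousAt.continuousWithinAt.congr
            (fun z _ => rfl) rfl
        · intro t ht
          rw [interior_Icc] at ht
          have := ((hd t (hsub (Ioo_subset_Icc_self ht))).sub
            ((hasDerivAt_id t).const_mul (ψ u))).hasDerivWithinAt (s := interior (Icc v u))
          rw [interior_Icc]
          rw [interior_Icc, mul_one] at this
          exact this
        · intro t ht
          rw [interior_Icc] at ht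
          have := hmono (hsub (Ioo_subset_Icc_self ht)) hu ht.2.le
          linarith
      have := hg (left_mem_Icc.2 hvu) (right_mem_Icc.2 hvu) hvu
      simp only at this
      nlinarith
    exact h2 x y hx hy h

lemma condexp_jensen {Ω : Type*} {m m0 : MeasurableSpace Ω} (hm : m ≤ m0)
    (P : Measure Ω) [IsProbabilityMeasure P]
    {W φW : Ω → ℝ} {φ ψ : ℝ → ℝ} {a b : ℝ} (hab : a < b)
    (hφW : ∀ ω, φW ω = φ (W ω))
    (hWi : Integrable W P) (hφWi : Integrable φW P)
    (hWmem : ∀ᵐ ω ∂P, W ω ∈ Set.Icc a b)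
    (htang : ∀ x ∈ Set.Icc a b, ∀ y ∈ Set.Icc a b, φ x + ψ x * (y - x) ≤ φ y)
    (hφc : ContinuousOn φ (Set.Icc a b)) (hψc : ContinuousOn ψ (Set.Icc a b)) :
    ∀ᵐ ω ∂P, (P[W|m]) ω ∈ Set.Icc a b ∧
      φ ((P[W|m]) ω) ≤ (P[φW|m]) ω := by
  have hmema : ∀ᵐ ω ∂P, a ≤ (P[W|m]) ω := by
    have h1 : (fun _ : Ω => a) ≤ᵐ[P] W := hWmem.mono fun ω hω => hω.1
    have := condExp_mono (m := m) (integrable_const a) hWi h1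
    rw [condExp_const hm] at this
    exact this
  have hmemb : ∀ᵐ ω ∂P, (P[W|m]) ω ≤ b := by
    have h1 : W ≤ᵐ[P] (fun _ : Ω => b) := hWmem.mono fun ω hω => hω.2
    have := condExp_mono (m := m) hWi (integrable_const b) h1
    rw [condExp_const hm] at this
    exact this
  have key : ∀ r : ℚ, ∀ᵐ ω ∂P, (r : ℝ) ∈ Set.Icc a b →
      φ r + ψ r * ((P[W|m]) ω - r) ≤ (P[φW|m]) ω := by
    intro r
    by_cases hr : (r : ℝ) ∈ Set.Icc a b
    · have hpt : (fun ω => (φ r - ψ r * r) + ψ r * W ω) ≤ᵐ[P] φW := by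
        filter_upwards [hWmem] with ω hω
        have := htang r hr (W ω) hω
        rw [hφW ω]
        linarith
      have hfun : (fun ω => (φ r - ψ r * r) + ψ r * W ω)
          = (fun _ => (φ r - ψ r * r)) + (ψ r • W) := by
        ext ω; simp [smul_eq_mul]
      have hint : Integrable (fun ω => (φ r - ψ r * r) + ψ r * W ω) P :=
        (integrable_const _).add (hWi.const_mul _)
      have hle := condExp_mono (m := m) hint hφWi hpt
      rw [hfun] at hle
      have h1 := condExp_add (m := m) (μ := P) (integrable_const (φ r - ψ r * r))
        ((hWi.smul (ψ r)) : Integrable (ψ r • W) P)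
      have h2 := condExp_smul (m := m) (μ := P) (ψ r) W
      rw [condExp_const hm] at h1
      filter_upwards [hle, h1, h2] with ω hleω h1ω h2ω _
      have h2ω' : (P[ψ r • W|m]) ω = ψ r * (P[W|m]) ω := by
        rw [h2ω]; simp [smul_eq_mul]
      have h1ω' : (P[(fun _ => (φ r - ψ r * r)) + ψ r • W|m]) ω
          = (φ r - ψ r * r) + ψ r * (P[W|m]) ω := by
        rw [h1ω]
        simp [h2ω']
      have := hleω
      rw [h1ω'] at this
      linarith
    · filter_upwards with ω hω
      exact absurd hω hr
  filter_upwards [hmema, hmemb, ae_all_iff.2 key] with ω h1 h2 hkey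
  refine ⟨⟨h1, h2⟩, ?_⟩
  set x₀ := (P[W|m]) ω with hx₀
  have hx₀mem : x₀ ∈ Set.Icc a b := ⟨h1, h2⟩
  refine le_of_forall_pos_le_add fun ε hε => ?_
  have hG : ContinuousWithinAt (fun r => φ r + ψ r * (x₀ - r)) (Set.Icc a b) x₀ := by
    apply ((hφc.continuousWithinAt hx₀mem).add
      ((hψc.continuousWithinAt hx₀mem).mul ?_))
    exact (continuous_const.sub continuous_id).continuousWithinAt
  have hev : (fun r => φ r + ψ r * (x₀ - r)) ⁻¹' (Set.Ioi (φ x₀ - ε))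
      ∈ nhdsWithin x₀ (Set.Icc a b) := by
    apply hG
    have h : (fun r => φ r + ψ r * (x₀ - r)) x₀ = φ x₀ := by simp
    rw [h]
    exact Ioi_mem_nhds (by linarith)
  obtain ⟨V, hVo, hx₀V, hVsub⟩ := mem_nhdsWithin.1 hev
  obtain ⟨δ, hδ, hball⟩ := Metric.isOpen_iff.1 hVo x₀ hx₀V
  -- find a rational point in V ∩ Icc a b
  obtain ⟨r, hrIcc, hrV⟩ : ∃ r : ℚ, (r : ℝ) ∈ Set.Icc a b ∧ (r : ℝ) ∈ V := by
    rcases lt_or_eq_of_le h2 with hlt | heq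
    · obtain ⟨r, hr1, hr2⟩ := exists_rat_btwn (lt_min hlt (by linarith : x₀ < x₀ + δ))
      refine ⟨r, ⟨h1.trans hr1.le, (hr2.trans_le (min_le_left _ _)).le⟩, hball ?_⟩
      rw [Metric.mem_ball, Real.dist_eq, abs_lt]
      have := hr2.trans_le (min_le_right _ _)
      constructor <;> linarith
    · obtain ⟨r, hr1, hr2⟩ := exists_rat_btwn
        (max_lt (heq ▸ hab : a < x₀) (by linarith : x₀ - δ < x₀))
      have hra := le_max_left a (x₀ - δ)
      have hrδ := le_max_right a (x₀ - δ)
      refine ⟨r, ⟨(hra.trans_lt hr1).le, hr2.le.trans (heq ▸ le_refl x₀)⟩, hball ?_⟩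
      rw [Metric.mem_ball, Real.dist_eq, abs_lt]
      have : x₀ - δ < (r : ℝ) := hrδ.trans_lt hr1
      constructor <;> linarith
  have hGr : φ x₀ - ε < φ r + ψ r * (x₀ - r) := hVsub ⟨hrV, hrIcc⟩
  have := hkey r hrIcc
  linarith
-- package 1: tangent data for φ = expq q on [a,b] with -1 ≤ a
lemma hasDerivAt_expq {q : ℝ} (hq0 : 0 < q) (hq1 : q < 1) (x : ℝ) :
    HasDerivAt (expq q) ((1 + (1 - q) * x) ^ ((1:ℝ) / (1 - q) - 1)) x := by
  have hs : (0:ℝ) < 1 - q := by linarith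
  have hp : (1:ℝ) ≤ 1 / (1 - q) := by
    rw [le_div_iff₀ hs]; linarith
  have hinner : HasDerivAt (fun x : ℝ => 1 + (1 - q) * x) (1 - q) x := by
    simpa using ((hasDerivAt_id x).const_mul (1 - q)).const_add 1
  have houter := Real.hasDerivAt_rpow_const (x := 1 + (1 - q) * x)
    (p := (1:ℝ) / (1 - q)) (Or.inr hp)
  have := houter.comp x hinner
  refine this.congr_deriv ?_
  rw [mul_comm _ (1 - q), ← mul_assoc, mul_one_div_cancel hs.ne', one_mul]

lemma continuous_expq {q : ℝ} (hq1 : q < 1) : Continuous (expq q) := by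
  have hs : (0:ℝ) < 1 - q := by linarith
  unfold expq
  apply continuous_iff_continuousAt.2
  intro x
  exact (Real.continuousAt_rpow_const _ _ (Or.inr (by positivity))).comp
    (by fun_prop)

lemma continuous_psi1 {q : ℝ} (hq0 : 0 < q) (hq1 : q < 1) :
    Continuous (fun x : ℝ => (1 + (1 - q) * x) ^ ((1:ℝ) / (1 - q) - 1)) := by
  have hs : (0:ℝ) < 1 - q := by linarith
  have hp : (0:ℝ) < (1:ℝ) / (1 - q) - 1 := by
    rw [lt_sub_iff_add_lt, zero_add, lt_div_iff₀ hs]; nlinarith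
  apply continuous_iff_continuousAt.2
  intro x
  exact (Real.continuousAt_rpow_const _ _ (Or.inr hp.le)).comp (by fun_prop)

lemma tangent1 {q a b : ℝ} (hq0 : 0 < q) (hq1 : q < 1) (ha : -1 ≤ a) :
    ∀ x ∈ Set.Icc a b, ∀ y ∈ Set.Icc a b,
      expq q x + (1 + (1 - q) * x) ^ ((1:ℝ) / (1 - q) - 1) * (y - x) ≤ expq q y := by
  have hs : (0:ℝ) < 1 - q := by linarith
  apply tangent_of_monotone
  · exact fun x _ => hasDerivAt_expq hq0 hq1 x
  · intro x hx y hy hxy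
    have hbx : 0 ≤ 1 + (1 - q) * x := by nlinarith [hx.1]
    have hp : (0:ℝ) ≤ (1:ℝ) / (1 - q) - 1 := by
      rw [sub_nonneg, le_div_iff₀ hs]; nlinarith
    exact Real.rpow_le_rpow hbx (by nlinarith) hp
-- helper: (expq q x) ^ (1-q) = 1 + (1-q) x
lemma expq_rpow {q x : ℝ} (hq : q < 1) (hx : 0 ≤ 1 + (1 - q) * x) :
    (expq q x) ^ (1 - q) = 1 + (1 - q) * x := by
  have hs : (0:ℝ) < 1 - q := by linarith
  unfold expq
  rw [← Real.rpow_mul hx, one_div_mul_cancel hs.ne', Real.rpow_one]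

lemma continuous_lnq {q : ℝ} (hq : q < 1) : Continuous (lnq q) := by
  have hs : (0:ℝ) < 1 - q := by linarith
  unfold lnq
  apply Continuous.div_const
  apply Continuous.sub _ continuous_const
  exact continuous_iff_continuousAt.2 fun x =>
    Real.continuousAt_rpow_const _ _ (Or.inr hs.le)

-- rewrite x ^ (1-q) in terms of lnq
lemma rpow_eq_lnq {q z : ℝ} (hq : q < 1) :
    z ^ (1 - q) = 1 + (1 - q) * lnq q z := by
  have hs : (0:ℝ) < 1 - q := by linarith
  unfold lnq
  field_simp
  ring

-- package 2 : tangent data for φ₂ = expq q₂ ∘ lnq q₁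
lemma hasDerivAt_phi2 {q₁ q₂ : ℝ} (hq₁ : 0 < q₁) (hq₁₂ : q₁ ≤ q₂) (hq₂ : q₂ < 1)
    {z : ℝ} (hz0 : 0 < z)
    (hu0 : 0 < 1 + (1 - q₂) * lnq q₁ z) :
    HasDerivAt (fun z => expq q₂ (lnq q₁ z))
      ((1 + (1 - q₂) * lnq q₁ z) ^ ((1:ℝ) / (1 - q₂) - 1) * z ^ ((1 - q₁) - 1)) z := by
  have hq₁1 : q₁ < 1 := lt_of_le_of_lt hq₁₂ hq₂
  have hs₁ : (0:ℝ) < 1 - q₁ := by linarith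
  have hs₂ : (0:ℝ) < 1 - q₂ := by linarith
  have hpow := Real.hasDerivAt_rpow_const (x := z) (p := 1 - q₁) (Or.inl hz0.ne')
  have hw : HasDerivAt (fun z => 1 + (1 - q₂) * lnq q₁ z)
      ((1 - q₂) * ((1 - q₁) * z ^ ((1 - q₁) - 1) / (1 - q₁))) z := by
    have := (((hpow.sub_const 1).div_const (1 - q₁)).const_mul (1 - q₂)).const_add 1
    simpa [lnq] using this
  have hp2 : (1:ℝ) ≤ 1 / (1 - q₂) := by rw [le_div_iff₀ hs₂]; linarith
  have houter := Real.hasDerivAt_rpow_const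
    (x := 1 + (1 - q₂) * lnq q₁ z) (p := (1:ℝ) / (1 - q₂)) (Or.inr hp2)
  have hcomp := houter.comp z hw
  have hfun : ((fun w : ℝ => w ^ ((1:ℝ) / (1 - q₂))) ∘ fun z => 1 + (1 - q₂) * lnq q₁ z)
      = fun z => expq q₂ (lnq q₁ z) := by
    ext z; simp [expq, Function.comp]
  rw [hfun] at hcomp
  refine hcomp.congr_deriv ?_
  field_simp
lemma pack2_facts {q₁ q₂ a b : ℝ} (hq₁ : 0 < q₁) (hq₁₂ : q₁ ≤ q₂) (hq₂ : q₂ < 1)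
    (ha0 : 0 < a) (haq : q₁ ≤ a ^ (1 - q₁)) {z : ℝ} (hz : z ∈ Set.Icc a b) :
    0 < z ∧ -1 ≤ lnq q₁ z ∧ q₂ ≤ 1 + (1 - q₂) * lnq q₁ z := by
  have hq₁1 : q₁ < 1 := lt_of_le_of_lt hq₁₂ hq₂
  have hs₁ : (0:ℝ) < 1 - q₁ := by linarith
  have hz0 : 0 < z := ha0.trans_le hz.1
  have hv : q₁ ≤ z ^ (1 - q₁) :=
    haq.trans (Real.rpow_le_rpow ha0.le hz.1 hs₁.le)
  have hL : -1 ≤ lnq q₁ z := by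
    rw [rpow_eq_lnq hq₁1] at hv
    nlinarith
  exact ⟨hz0, hL, by nlinarith⟩

lemma mono_psi2 {q₁ q₂ a b : ℝ} (hq₁ : 0 < q₁) (hq₁₂ : q₁ ≤ q₂) (hq₂ : q₂ < 1)
    (ha0 : 0 < a) (haq : q₁ ≤ a ^ (1 - q₁)) :
    MonotoneOn (fun z => (1 + (1 - q₂) * lnq q₁ z) ^ ((1:ℝ) / (1 - q₂) - 1)
      * z ^ ((1 - q₁) - 1)) (Set.Icc a b) := by
  have hq₁1 : q₁ < 1 := lt_of_le_of_lt hq₁₂ hq₂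
  have hs₁ : (0:ℝ) < 1 - q₁ := by linarith
  have hs₂ : (0:ℝ) < 1 - q₂ := by linarith
  have hq₂0 : 0 < q₂ := hq₁.trans_le hq₁₂
  set h : ℝ → ℝ := fun z => ((1:ℝ) / (1 - q₂) - 1) * Real.log (1 + (1 - q₂) * lnq q₁ z)
    + ((1 - q₁) - 1) * Real.log z with hh
  have heq : ∀ z ∈ Set.Icc a b,
      (1 + (1 - q₂) * lnq q₁ z) ^ ((1:ℝ) / (1 - q₂) - 1) * z ^ ((1 - q₁) - 1)
        = Real.exp (h z) := by
    intro z hz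
    obtain ⟨hz0, hL, hu⟩ := pack2_facts hq₁ hq₁₂ hq₂ ha0 haq hz
    have hu0 : 0 < 1 + (1 - q₂) * lnq q₁ z := hq₂0.trans_le hu
    rw [Real.rpow_def_of_pos hu0, Real.rpow_def_of_pos hz0, ← Real.exp_add, hh]
    ring_nf
  have hmonoh : MonotoneOn h (Set.Icc a b) := by
    apply monotoneOn_of_hasDerivWithinAt_nonneg (convex_Icc a b)
      (f' := fun z => ((1:ℝ) / (1 - q₂) - 1) *
        ((1 + (1 - q₂) * lnq q₁ z)⁻¹ * ((1 - q₂) * ((1 - q₁) * z ^ ((1 - q₁) - 1) / (1 - q₁))))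
        + ((1 - q₁) - 1) * z⁻¹)
    · -- continuity
      intro z hz
      obtain ⟨hz0, hL, hu⟩ := pack2_facts hq₁ hq₁₂ hq₂ ha0 haq hz
      have hu0 : 0 < 1 + (1 - q₂) * lnq q₁ z := hq₂0.trans_le hu
      apply ContinuousAt.continuousWithinAt
      have hcu : ContinuousAt (fun z => 1 + (1 - q₂) * lnq q₁ z) z :=
        (continuous_const.add (continuous_const.mul (continuous_lnq hq₁1))).continuousAt
      exact (continuousAt_const.mul (hcu.log hu0.ne')).add
        (continuousAt_const.mul (continuousAt_id.log hz0.ne'))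
    · -- derivative
      intro z hz
      rw [interior_Icc] at hz
      obtain ⟨hz0, hL, hu⟩ := pack2_facts hq₁ hq₁₂ hq₂ ha0 haq (Set.Ioo_subset_Icc_self hz)
      have hu0 : 0 < 1 + (1 - q₂) * lnq q₁ z := hq₂0.trans_le hu
      have hpow := Real.hasDerivAt_rpow_const (x := z) (p := 1 - q₁) (Or.inl hz0.ne')
      have hw : HasDerivAt (fun z => 1 + (1 - q₂) * lnq q₁ z)
          ((1 - q₂) * ((1 - q₁) * z ^ ((1 - q₁) - 1) / (1 - q₁))) z := by
        have := (((hpow.sub_const 1).div_const (1 - q₁)).const_mul (1 - q₂)).const_add 1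
        simpa [lnq] using this
      have hlogu := (Real.hasDerivAt_log hu0.ne').comp z hw
      have hlogz := Real.hasDerivAt_log hz0.ne'
      have := ((hlogu.const_mul ((1:ℝ) / (1 - q₂) - 1)).add (hlogz.const_mul ((1 - q₁) - 1)))
      apply HasDerivAt.hasDerivWithinAt
      convert this using 1
      rfl
    · -- nonnegativity
      intro z hz
      rw [interior_Icc] at hz
      obtain ⟨hz0, hL, hu⟩ := pack2_facts hq₁ hq₁₂ hq₂ ha0 haq (Set.Ioo_subset_Icc_self hz)
      have hu0 : 0 < 1 + (1 - q₂) * lnq q₁ z := hq₂0.trans_le hu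
      have hzv : z ^ ((1 - q₁) - 1) = z ^ (1 - q₁) / z := by
        rw [Real.rpow_sub hz0, Real.rpow_one]
      rw [hzv, rpow_eq_lnq hq₁1]
      set L := lnq q₁ z with hLdef
      have hexpand : ((1:ℝ) / (1 - q₂) - 1) *
          ((1 + (1 - q₂) * L)⁻¹ * ((1 - q₂) * ((1 - q₁) * ((1 + (1 - q₁) * L) / z) / (1 - q₁))))
          + ((1 - q₁) - 1) * z⁻¹
          = ((q₂ - q₁) * (1 + L)) / ((1 + (1 - q₂) * L) * z) := by
        field_simp
        ring
      rw [hexpand]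
      apply div_nonneg
      · apply mul_nonneg (by linarith) (by linarith)
      · positivity
  intro x hx y hy hxy
  dsimp only
  rw [heq x hx, heq y hy]
  exact Real.exp_le_exp.2 (hmonoh hx hy hxy)
lemma tangent2 {q₁ q₂ a b : ℝ} (hq₁ : 0 < q₁) (hq₁₂ : q₁ ≤ q₂) (hq₂ : q₂ < 1)
    (ha0 : 0 < a) (haq : q₁ ≤ a ^ (1 - q₁)) :
    ∀ x ∈ Set.Icc a b, ∀ y ∈ Set.Icc a b,
      expq q₂ (lnq q₁ x) + (1 + (1 - q₂) * lnq q₁ x) ^ ((1:ℝ) / (1 - q₂) - 1)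
        * x ^ ((1 - q₁) - 1) * (y - x) ≤ expq q₂ (lnq q₁ y) := by
  have hq₂0 : 0 < q₂ := hq₁.trans_le hq₁₂
  apply tangent_of_monotone
  · intro x hx
    obtain ⟨hz0, hL, hu⟩ := pack2_facts hq₁ hq₁₂ hq₂ ha0 haq hx
    exact hasDerivAt_phi2 hq₁ hq₁₂ hq₂ hz0 (hq₂0.trans_le hu)
  · exact mono_psi2 hq₁ hq₁₂ hq₂ ha0 haq

lemma contOn_psi2 {q₁ q₂ a b : ℝ} (hq₁ : 0 < q₁) (hq₁₂ : q₁ ≤ q₂) (hq₂ : q₂ < 1)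
    (ha0 : 0 < a) (haq : q₁ ≤ a ^ (1 - q₁)) :
    ContinuousOn (fun z : ℝ => (1 + (1 - q₂) * lnq q₁ z) ^ ((1:ℝ) / (1 - q₂) - 1)
      * z ^ ((1 - q₁) - 1)) (Set.Icc a b) := by
  have hq₁1 : q₁ < 1 := lt_of_le_of_lt hq₁₂ hq₂
  have hs₂ : (0:ℝ) < 1 - q₂ := by linarith
  intro z hz
  obtain ⟨hz0, hL, hu⟩ := pack2_facts hq₁ hq₁₂ hq₂ ha0 haq hz
  apply ContinuousAt.continuousWithinAt
  have hcu : ContinuousAt (fun z => 1 + (1 - q₂) * lnq q₁ z) z :=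
    (continuous_const.add (continuous_const.mul (continuous_lnq hq₁1))).continuousAt
  have hp : (0:ℝ) ≤ (1:ℝ) / (1 - q₂) - 1 := by
    rw [sub_nonneg, le_div_iff₀ hs₂]; linarith
  exact (hcu.rpow_const (Or.inr hp)).mul
    (continuousAt_id.rpow_const (Or.inl hz0.ne'))

-- package 3 : tangent data for φ₃ = exp ∘ lnq q₂
lemma pack3_facts {q₂ a b : ℝ} (hq₂0 : 0 < q₂) (hq₂ : q₂ < 1)
    (ha0 : 0 < a) (haq : q₂ ≤ a ^ (1 - q₂)) {z : ℝ} (hz : z ∈ Set.Icc a b) :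
    0 < z ∧ -1 ≤ lnq q₂ z := by
  have hs₂ : (0:ℝ) < 1 - q₂ := by linarith
  have hz0 : 0 < z := ha0.trans_le hz.1
  have hv : q₂ ≤ z ^ (1 - q₂) :=
    haq.trans (Real.rpow_le_rpow ha0.le hz.1 hs₂.le)
  rw [rpow_eq_lnq hq₂] at hv
  exact ⟨hz0, by nlinarith⟩

lemma hasDerivAt_phi3 {q₂ : ℝ} (hq₂0 : 0 < q₂) (hq₂ : q₂ < 1) {z : ℝ} (hz0 : 0 < z) :
    HasDerivAt (fun z => Real.exp (lnq q₂ z))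
      (Real.exp (lnq q₂ z) * z ^ ((1 - q₂) - 1)) z := by
  have hs₂ : (0:ℝ) < 1 - q₂ := by linarith
  have hpow := Real.hasDerivAt_rpow_const (x := z) (p := 1 - q₂) (Or.inl hz0.ne')
  have hlnq : HasDerivAt (lnq q₂) ((1 - q₂) * z ^ ((1 - q₂) - 1) / (1 - q₂)) z := by
    have := (hpow.sub_const 1).div_const (1 - q₂)
    exact this
  have := hlnq.exp
  convert this using 1
  field_simp

lemma mono_psi3 {q₂ a b : ℝ} (hq₂0 : 0 < q₂) (hq₂ : q₂ < 1)
    (ha0 : 0 < a) (haq : q₂ ≤ a ^ (1 - q₂)) :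
    MonotoneOn (fun z => Real.exp (lnq q₂ z) * z ^ ((1 - q₂) - 1)) (Set.Icc a b) := by
  have hs₂ : (0:ℝ) < 1 - q₂ := by linarith
  set h : ℝ → ℝ := fun z => lnq q₂ z + ((1 - q₂) - 1) * Real.log z with hh
  have heq : ∀ z ∈ Set.Icc a b,
      Real.exp (lnq q₂ z) * z ^ ((1 - q₂) - 1) = Real.exp (h z) := by
    intro z hz
    obtain ⟨hz0, hL⟩ := pack3_facts hq₂0 hq₂ ha0 haq hz
    rw [Real.rpow_def_of_pos hz0, ← Real.exp_add, hh]
    ring_nf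
  have hmonoh : MonotoneOn h (Set.Icc a b) := by
    apply monotoneOn_of_hasDerivWithinAt_nonneg (convex_Icc a b)
      (f' := fun z => (1 - q₂) * z ^ ((1 - q₂) - 1) / (1 - q₂) + ((1 - q₂) - 1) * z⁻¹)
    · intro z hz
      obtain ⟨hz0, hL⟩ := pack3_facts hq₂0 hq₂ ha0 haq hz
      apply ContinuousAt.continuousWithinAt
      exact ((continuous_lnq hq₂).continuousAt).add
        (continuousAt_const.mul (continuousAt_id.log hz0.ne'))
    · intro z hz
      rw [interior_Icc] at hz
      obtain ⟨hz0, hL⟩ := pack3_facts hq₂0 hq₂ ha0 haq (Set.Ioo_subset_Icc_self hz)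
      have hpow := Real.hasDerivAt_rpow_const (x := z) (p := 1 - q₂) (Or.inl hz0.ne')
      have hlnq : HasDerivAt (lnq q₂) ((1 - q₂) * z ^ ((1 - q₂) - 1) / (1 - q₂)) z := by
        have := (hpow.sub_const 1).div_const (1 - q₂)
        exact this
      exact (hlnq.add ((Real.hasDerivAt_log hz0.ne').const_mul ((1 - q₂) - 1))).hasDerivWithinAt
    · intro z hz
      rw [interior_Icc] at hz
      obtain ⟨hz0, hL⟩ := pack3_facts hq₂0 hq₂ ha0 haq (Set.Ioo_subset_Icc_self hz)
      have hzv : z ^ ((1 - q₂) - 1) = z ^ (1 - q₂) / z := by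
        rw [Real.rpow_sub hz0, Real.rpow_one]
      rw [hzv, rpow_eq_lnq hq₂]
      set L := lnq q₂ z
      have hexpand : (1 - q₂) * ((1 + (1 - q₂) * L) / z) / (1 - q₂) + ((1 - q₂) - 1) * z⁻¹
          = ((1 - q₂) * (1 + L)) / z := by
        field_simp
        ring
      rw [hexpand]
      apply div_nonneg (mul_nonneg hs₂.le (by linarith)) hz0.le
  intro x hx y hy hxy
  dsimp only
  rw [heq x hx, heq y hy]
  exact Real.exp_le_exp.2 (hmonoh hx hy hxy)

lemma tangent3 {q₂ a b : ℝ} (hq₂0 : 0 < q₂) (hq₂ : q₂ < 1)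
    (ha0 : 0 < a) (haq : q₂ ≤ a ^ (1 - q₂)) :
    ∀ x ∈ Set.Icc a b, ∀ y ∈ Set.Icc a b,
      Real.exp (lnq q₂ x) + Real.exp (lnq q₂ x) * x ^ ((1 - q₂) - 1) * (y - x)
        ≤ Real.exp (lnq q₂ y) := by
  apply tangent_of_monotone
  · intro x hx
    exact hasDerivAt_phi3 hq₂0 hq₂ (pack3_facts hq₂0 hq₂ ha0 haq hx).1
  · exact mono_psi3 hq₂0 hq₂ ha0 haq

lemma contOn_psi3 {q₂ a b : ℝ} (hq₂0 : 0 < q₂) (hq₂ : q₂ < 1)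
    (ha0 : 0 < a) (haq : q₂ ≤ a ^ (1 - q₂)) :
    ContinuousOn (fun z : ℝ => Real.exp (lnq q₂ z) * z ^ ((1 - q₂) - 1)) (Set.Icc a b) := by
  intro z hz
  obtain ⟨hz0, hL⟩ := pack3_facts hq₂0 hq₂ ha0 haq hz
  apply ContinuousAt.continuousWithinAt
  exact (Real.continuous_exp.continuousAt.comp (continuous_lnq hq₂).continuousAt).mul
    (continuousAt_id.rpow_const (Or.inl hz0.ne'))

set_option maxHeartbeats 1000000 in
/-- Monotonicity in `q` of the q-entropic risk measure on losses: almost surely,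
`E[(X+β)⁻ + α₀ | 𝓕_t] ≤ ρ^{q₁}_{tu}(X) ≤ ρ^{q₂}_{tu}(X) ≤ ln E[exp((X+β)⁻ + α₁) | 𝓕_t]`
for `0 < q₁ ≤ q₂ < 1` and `-1 ≤ α₀ ≤ α_{q₁} ≤ α_{q₂} ≤ α₁`. -/
theorem q_entropic_monotone_in_q
    {Ω : Type*} {m0 : MeasurableSpace Ω} (P : Measure Ω) [IsProbabilityMeasure P]
    (T : ℝ) (ℱ : Filtration ℝ m0) (t u : ℝ)
    (h0t : 0 ≤ t) (htu : t ≤ u) (huT : u ≤ T)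
    (β : ℝ) (hβ : 0 ≤ β)
    (q₁ q₂ : ℝ) (hq₁ : 0 < q₁) (hq₁₂ : q₁ ≤ q₂) (hq₂ : q₂ < 1)
    (α₀ αq₁ αq₂ α₁ : ℝ)
    (hα₀ : -1 ≤ α₀) (h₀₁ : α₀ ≤ αq₁) (h₁₂ : αq₁ ≤ αq₂) (h₂₃ : αq₂ ≤ α₁)
    (X : Ω → ℝ) (hX : StronglyMeasurable[ℱ u] X) (hXb : MemLp X ⊤ P) :
    ∀ᵐ ω ∂P,
      (P[fun ω' => max (-(X ω' + β)) 0 + α₀ | ℱ t]) ω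
          ≤ lnq q₁ ((P[fun ω' => expq q₁ (max (-(X ω' + β)) 0 + αq₁) | ℱ t]) ω)
      ∧ lnq q₁ ((P[fun ω' => expq q₁ (max (-(X ω' + β)) 0 + αq₁) | ℱ t]) ω)
          ≤ lnq q₂ ((P[fun ω' => expq q₂ (max (-(X ω' + β)) 0 + αq₂) | ℱ t]) ω)
      ∧ lnq q₂ ((P[fun ω' => expq q₂ (max (-(X ω' + β)) 0 + αq₂) | ℱ t]) ω)
          ≤ Real.log ((P[fun ω' => Real.exp (max (-(X ω' + β)) 0 + α₁) | ℱ t]) ω) := by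
  have hq₁1 : q₁ < 1 := lt_of_le_of_lt hq₁₂ hq₂
  have hq₂0 : 0 < q₂ := hq₁.trans_le hq₁₂
  have hs₁ : (0:ℝ) < 1 - q₁ := by linarith
  have hs₂ : (0:ℝ) < 1 - q₂ := by linarith
  have hαq₁ : -1 ≤ αq₁ := hα₀.trans h₀₁
  have hαq₂ : -1 ≤ αq₂ := hαq₁.trans h₁₂
  have hm : ℱ t ≤ m0 := ℱ.le t
  have hXm : StronglyMeasurable[m0] X := hX.mono (ℱ.le u)
  -- bound on X
  set M : ℝ := (eLpNorm X ⊤ P).toReal with hMdef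
  have hM0 : 0 ≤ M := ENNReal.toReal_nonneg
  have hMX : ∀ᵐ ω ∂P, |X ω| ≤ M := by
    have h1 := ae_le_eLpNormEssSup (f := X) (μ := P)
    have h2 : eLpNorm X ⊤ P ≠ ⊤ := hXb.2.ne
    filter_upwards [h1] with ω hω
    have h3 : ((‖X ω‖₊ : ℝ≥0∞)).toReal ≤ (eLpNormEssSup X P).toReal :=
      ENNReal.toReal_mono (by rwa [eLpNorm_exponent_top] at h2) hω
    rw [ENNReal.coe_toReal, coe_nnnorm, Real.norm_eq_abs] at h3
    rw [hMdef, eLpNorm_exponent_top]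
    exact h3
  set B : ℝ := M + β with hBdef
  have hB0 : 0 ≤ B := by positivity
  -- the loss is bounded
  have hLmem : ∀ᵐ ω ∂P, max (-(X ω + β)) 0 ∈ Set.Icc 0 B := by
    filter_upwards [hMX] with ω hω
    have := abs_le.1 hω
    exact ⟨le_max_right _ _, max_le (by linarith [this.1]) hB0⟩
  have hLsm : StronglyMeasurable (fun ω => max (-(X ω + β)) 0) :=
    (continuous_id.max continuous_const).comp_stronglyMeasurable
      (hXm.add_const β).neg
  have hbnd : ∀ (f : Ω → ℝ) (K : ℝ), StronglyMeasurable f →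
      (∀ᵐ ω ∂P, ‖f ω‖ ≤ K) → Integrable f P :=
    fun f K hf hK => Integrable.mono' (integrable_const K) hf.aestronglyMeasurable hK
  -- integrability of all integrands
  have hW1i : Integrable (fun ω => max (-(X ω + β)) 0 + αq₁) P := by
    apply hbnd _ (B + |αq₁|) (hLsm.add_const αq₁)
    filter_upwards [hLmem] with ω hω
    rw [Real.norm_eq_abs, abs_le]
    have h1 := neg_abs_le αq₁
    have h2 := le_abs_self αq₁
    exact ⟨by linarith [hω.1], by linarith [hω.2]⟩
  have hW0i : Integrable (fun ω => max (-(X ω + β)) 0 + α₀) P := by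
    apply hbnd _ (B + |α₀|) (hLsm.add_const α₀)
    filter_upwards [hLmem] with ω hω
    rw [Real.norm_eq_abs, abs_le]
    have h1 := neg_abs_le α₀
    have h2 := le_abs_self α₀
    exact ⟨by linarith [hω.1], by linarith [hω.2]⟩
  -- more integrable functions
  have hsmW2 : StronglyMeasurable (fun ω => expq q₁ (max (-(X ω + β)) 0 + αq₁)) :=
    (continuous_expq hq₁1).comp_stronglyMeasurable (hLsm.add_const αq₁)
  have hbase1 : ∀ᵐ ω ∂P, 0 ≤ 1 + (1 - q₁) * (max (-(X ω + β)) 0 + αq₁) := by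
    filter_upwards [hLmem] with ω hω
    nlinarith [hω.1]
  have hW2i : Integrable (fun ω => expq q₁ (max (-(X ω + β)) 0 + αq₁)) P := by
    apply hbnd _ (expq q₁ (B + αq₁)) hsmW2
    filter_upwards [hLmem] with ω hω
    have hb : 0 ≤ 1 + (1 - q₁) * (max (-(X ω + β)) 0 + αq₁) := by nlinarith [hω.1]
    rw [Real.norm_eq_abs, abs_of_nonneg (expq_nonneg hb)]
    exact expq_mono hq₁1 hb (by linarith [hω.2])
  -- Part 1
  have part1 : ∀ᵐ ω ∂P,
      (P[fun ω' => max (-(X ω' + β)) 0 + α₀ | ℱ t]) ω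
        ≤ lnq q₁ ((P[fun ω' => expq q₁ (max (-(X ω' + β)) 0 + αq₁) | ℱ t]) ω) := by
    have hJ := condexp_jensen hm P
      (W := fun ω' => max (-(X ω' + β)) 0 + αq₁)
      (φW := fun ω' => expq q₁ (max (-(X ω' + β)) 0 + αq₁))
      (φ := expq q₁)
      (ψ := fun x => (1 + (1 - q₁) * x) ^ ((1:ℝ) / (1 - q₁) - 1))
      (a := αq₁) (b := B + αq₁ + 1)
      (by linarith) (fun ω => rfl) hW1i hW2i
      (by filter_upwards [hLmem] with ω hω
          exact ⟨by linarith [hω.1], by linarith [hω.2]⟩)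
      (tangent1 hq₁ hq₁1 hαq₁)
      (continuous_expq hq₁1).continuousOn
      (continuous_psi1 hq₁ hq₁1).continuousOn
    have hmono := condExp_mono (m := ℱ t) hW0i hW1i
      (Filter.Eventually.of_forall fun ω => by simp only; linarith)
    filter_upwards [hJ, hmono] with ω hJω hmω
    have hx₁ : αq₁ ≤ (P[fun ω' => max (-(X ω' + β)) 0 + αq₁ | ℱ t]) ω := hJω.1.1
    have hb : 0 ≤ 1 + (1 - q₁) * (P[fun ω' => max (-(X ω' + β)) 0 + αq₁ | ℱ t]) ω := by
      nlinarith
    calc (P[fun ω' => max (-(X ω' + β)) 0 + α₀ | ℱ t]) ω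
        ≤ (P[fun ω' => max (-(X ω' + β)) 0 + αq₁ | ℱ t]) ω := hmω
      _ = lnq q₁ (expq q₁ ((P[fun ω' => max (-(X ω' + β)) 0 + αq₁ | ℱ t]) ω)) :=
          (lnq_expq hq₁1 hb).symm
      _ ≤ lnq q₁ ((P[fun ω' => expq q₁ (max (-(X ω' + β)) 0 + αq₁) | ℱ t]) ω) :=
          lnq_mono hq₁1 (expq_nonneg hb) hJω.2
  -- Part 2 setup
  have hbαq₁ : (0:ℝ) < 1 + (1 - q₁) * αq₁ := by nlinarith
  have ha₂0 : 0 < expq q₁ αq₁ := expq_pos hbαq₁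
  have haq₂ : q₁ ≤ (expq q₁ αq₁) ^ (1 - q₁) := by
    rw [expq_rpow hq₁1 hbαq₁.le]; nlinarith
  have hsmW3 : StronglyMeasurable (fun ω => expq q₂ (max (-(X ω + β)) 0 + αq₂)) :=
    (continuous_expq hq₂).comp_stronglyMeasurable (hLsm.add_const αq₂)
  have hW3i : Integrable (fun ω => expq q₂ (max (-(X ω + β)) 0 + αq₂)) P := by
    apply hbnd _ (expq q₂ (B + αq₂)) hsmW3
    filter_upwards [hLmem] with ω hω
    have hb : 0 ≤ 1 + (1 - q₂) * (max (-(X ω + β)) 0 + αq₂) := by nlinarith [hω.1]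
    rw [Real.norm_eq_abs, abs_of_nonneg (expq_nonneg hb)]
    exact expq_mono hq₂ hb (by linarith [hω.2])
  -- pointwise identity for the composition in part 2
  have hcomp2 : ∀ ω, expq q₂ (lnq q₁ (expq q₁ (max (-(X ω + β)) 0 + αq₁)))
      = expq q₂ (max (-(X ω + β)) 0 + αq₁) := by
    intro ω
    have hb : 0 ≤ 1 + (1 - q₁) * (max (-(X ω + β)) 0 + αq₁) := by
      nlinarith [le_max_right (-(X ω + β)) 0]
    rw [lnq_expq hq₁1 hb]
  have hφW2i : Integrable
      (fun ω => expq q₂ (lnq q₁ (expq q₁ (max (-(X ω + β)) 0 + αq₁)))) P := by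
    apply hbnd _ (expq q₂ (B + αq₁))
      (((continuous_expq hq₂).comp (continuous_lnq hq₁1)).comp_stronglyMeasurable hsmW2)
    filter_upwards [hLmem] with ω hω
    simp only [Function.comp]
    rw [hcomp2 ω]
    have hb : 0 ≤ 1 + (1 - q₂) * (max (-(X ω + β)) 0 + αq₁) := by nlinarith [hω.1]
    rw [Real.norm_eq_abs, abs_of_nonneg (expq_nonneg hb)]
    exact expq_mono hq₂ hb (by linarith [hω.2])
  have part2 : ∀ᵐ ω ∂P,
      lnq q₁ ((P[fun ω' => expq q₁ (max (-(X ω' + β)) 0 + αq₁) | ℱ t]) ω)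
        ≤ lnq q₂ ((P[fun ω' => expq q₂ (max (-(X ω' + β)) 0 + αq₂) | ℱ t]) ω) := by
    have hJ := condexp_jensen hm P
      (W := fun ω' => expq q₁ (max (-(X ω' + β)) 0 + αq₁))
      (φW := fun ω' => expq q₂ (lnq q₁ (expq q₁ (max (-(X ω' + β)) 0 + αq₁))))
      (φ := fun z => expq q₂ (lnq q₁ z))
      (ψ := fun z => (1 + (1 - q₂) * lnq q₁ z) ^ ((1:ℝ) / (1 - q₂) - 1)
        * z ^ ((1 - q₁) - 1))
      (a := expq q₁ αq₁) (b := expq q₁ (B + αq₁) + 1)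
      (hab := by
        have : expq q₁ αq₁ ≤ expq q₁ (B + αq₁) := expq_mono hq₁1 hbαq₁.le (by linarith)
        linarith)
      (hφW := fun ω => rfl) (hWi := hW2i) (hφWi := hφW2i)
      (hWmem := by
        filter_upwards [hLmem, hbase1] with ω hω hb
        refine ⟨expq_mono hq₁1 hbαq₁.le (by linarith [hω.1]), ?_⟩
        have := expq_mono hq₁1 hb (show max (-(X ω + β)) 0 + αq₁ ≤ B + αq₁ by linarith [hω.2])
        linarith)
      (htang := tangent2 hq₁ hq₁₂ hq₂ ha₂0 haq₂)
      (hφc := ((continuous_expq hq₂).comp (continuous_lnq hq₁1)).continuousOn)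
      (hψc := contOn_psi2 hq₁ hq₁₂ hq₂ ha₂0 haq₂)
    have hpt2 : (fun ω => expq q₂ (lnq q₁ (expq q₁ (max (-(X ω + β)) 0 + αq₁))))
        ≤ᵐ[P] (fun ω => expq q₂ (max (-(X ω + β)) 0 + αq₂)) := by
      filter_upwards with ω
      rw [hcomp2 ω]
      have hb : 0 ≤ 1 + (1 - q₂) * (max (-(X ω + β)) 0 + αq₁) := by
        nlinarith [le_max_right (-(X ω + β)) 0]
      exact expq_mono hq₂ hb (by linarith)
    have hmono := condExp_mono (m := ℱ t) hφW2i hW3i hpt2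
    filter_upwards [hJ, hmono] with ω hJω hmω
    set x₂ := (P[fun ω' => expq q₁ (max (-(X ω' + β)) 0 + αq₁) | ℱ t]) ω with hx₂def
    have hx₂a : expq q₁ αq₁ ≤ x₂ := hJω.1.1
    have hL2 : -1 ≤ lnq q₁ x₂ := by
      have h := lnq_mono hq₁1 ha₂0.le hx₂a
      rw [lnq_expq hq₁1 hbαq₁.le] at h
      linarith
    have hb2 : 0 ≤ 1 + (1 - q₂) * lnq q₁ x₂ := by nlinarith
    calc lnq q₁ x₂
        = lnq q₂ (expq q₂ (lnq q₁ x₂)) := (lnq_expq hq₂ hb2).symm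
      _ ≤ lnq q₂ ((P[fun ω' => expq q₂ (max (-(X ω' + β)) 0 + αq₂) | ℱ t]) ω) :=
          lnq_mono hq₂ (expq_nonneg hb2) (hJω.2.trans hmω)
  -- Part 3 setup
  have hbαq₂ : (0:ℝ) < 1 + (1 - q₂) * αq₂ := by nlinarith
  have ha₃0 : 0 < expq q₂ αq₂ := expq_pos hbαq₂
  have haq₃ : q₂ ≤ (expq q₂ αq₂) ^ (1 - q₂) := by
    rw [expq_rpow hq₂ hbαq₂.le]; nlinarith
  have hsmW4 : StronglyMeasurable (fun ω => Real.exp (max (-(X ω + β)) 0 + α₁)) :=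
    Real.continuous_exp.comp_stronglyMeasurable (hLsm.add_const α₁)
  have hW4i : Integrable (fun ω => Real.exp (max (-(X ω + β)) 0 + α₁)) P := by
    apply hbnd _ (Real.exp (B + α₁)) hsmW4
    filter_upwards [hLmem] with ω hω
    rw [Real.norm_eq_abs, abs_of_nonneg (Real.exp_pos _).le]
    exact Real.exp_le_exp.2 (by linarith [hω.2])
  have hcomp3 : ∀ ω, Real.exp (lnq q₂ (expq q₂ (max (-(X ω + β)) 0 + αq₂)))
      = Real.exp (max (-(X ω + β)) 0 + αq₂) := by
    intro ω
    have hb : 0 ≤ 1 + (1 - q₂) * (max (-(X ω + β)) 0 + αq₂) := by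
      nlinarith [le_max_right (-(X ω + β)) 0]
    rw [lnq_expq hq₂ hb]
  have hφW3i : Integrable
      (fun ω => Real.exp (lnq q₂ (expq q₂ (max (-(X ω + β)) 0 + αq₂)))) P := by
    apply hbnd _ (Real.exp (B + αq₂))
      ((Real.continuous_exp.comp (continuous_lnq hq₂)).comp_stronglyMeasurable hsmW3)
    filter_upwards [hLmem] with ω hω
    simp only [Function.comp]
    rw [hcomp3 ω, Real.norm_eq_abs, abs_of_nonneg (Real.exp_pos _).le]
    exact Real.exp_le_exp.2 (by linarith [hω.2])
  have part3 : ∀ᵐ ω ∂P,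
      lnq q₂ ((P[fun ω' => expq q₂ (max (-(X ω' + β)) 0 + αq₂) | ℱ t]) ω)
        ≤ Real.log ((P[fun ω' => Real.exp (max (-(X ω' + β)) 0 + α₁) | ℱ t]) ω) := by
    have hJ := condexp_jensen hm P
      (W := fun ω' => expq q₂ (max (-(X ω' + β)) 0 + αq₂))
      (φW := fun ω' => Real.exp (lnq q₂ (expq q₂ (max (-(X ω' + β)) 0 + αq₂))))
      (φ := fun z => Real.exp (lnq q₂ z))
      (ψ := fun z => Real.exp (lnq q₂ z) * z ^ ((1 - q₂) - 1))
      (a := expq q₂ αq₂) (b := expq q₂ (B + αq₂) + 1)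
      (hab := by
        have : expq q₂ αq₂ ≤ expq q₂ (B + αq₂) := expq_mono hq₂ hbαq₂.le (by linarith)
        linarith)
      (hφW := fun ω => rfl) (hWi := hW3i) (hφWi := hφW3i)
      (hWmem := by
        filter_upwards [hLmem] with ω hω
        have hb : 0 ≤ 1 + (1 - q₂) * (max (-(X ω + β)) 0 + αq₂) := by nlinarith [hω.1]
        refine ⟨expq_mono hq₂ hbαq₂.le (by linarith [hω.1]), ?_⟩
        have := expq_mono hq₂ hb (show max (-(X ω + β)) 0 + αq₂ ≤ B + αq₂ by linarith [hω.2])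
        linarith)
      (htang := tangent3 hq₂0 hq₂ ha₃0 haq₃)
      (hφc := (Real.continuous_exp.comp (continuous_lnq hq₂)).continuousOn)
      (hψc := contOn_psi3 hq₂0 hq₂ ha₃0 haq₃)
    have hpt3 : (fun ω => Real.exp (lnq q₂ (expq q₂ (max (-(X ω + β)) 0 + αq₂))))
        ≤ᵐ[P] (fun ω => Real.exp (max (-(X ω + β)) 0 + α₁)) := by
      filter_upwards with ω
      rw [hcomp3 ω]
      exact Real.exp_le_exp.2 (by linarith)
    have hmono := condExp_mono (m := ℱ t) hφW3i hW4i hpt3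
    filter_upwards [hJ, hmono] with ω hJω hmω
    set x₃ := (P[fun ω' => expq q₂ (max (-(X ω' + β)) 0 + αq₂) | ℱ t]) ω with hx₃def
    calc lnq q₂ x₃
        = Real.log (Real.exp (lnq q₂ x₃)) := (Real.log_exp _).symm
      _ ≤ Real.log ((P[fun ω' => Real.exp (max (-(X ω' + β)) 0 + α₁) | ℱ t]) ω) :=
          Real.log_le_log (Real.exp_pos _) (hJω.2.trans hmω)
  filter_upwards [part1, part2, part3] with ω h1 h2 h3
  exact ⟨h1, h2, h3⟩
end

section
/- Let (U_u)_{u∈[0,T]} be a family of non-decreasing concave functions U_u : ℝ → ℝ and (B_{tu})_{0≤t≤u≤T} a family of real targets. Assume the family (U_u − B_{tu}) is non-increasing in the horizon, i.e. for all 0 ≤ t ≤ u ≤ v ≤ T and all x ∈ ℝ, U_u(x) − B_{tu} ≥ U_v(x) − B_{tv}. Then the acceptance sets of the fully-dynamic shortfall risk measure satisfy 𝒜^{U,B}_{tv} ∩ L^p(𝓕_u) ⊆ 𝒜^{U,B}_{tu}: for every 𝓕_u-measurable X ∈ L^p with U_u(X) and U_v(X) integrable, if E[U_v(X) | 𝓕_t]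 ≥ B_{tv} a.s. then E[U_u(X) | 𝓕_t] ≥ B_{tu} a.s. (This inclusion of acceptance sets is the h-longevity property of the associated fully-dynamic shortfall risk measure.) -/
open MeasureTheory Real
open scoped ENNReal

/-- H-longevity of the fully-dynamic shortfall risk measure, at the level of
acceptance sets: if the family `(U_u - B_{tu})` is non-increasing in the horizon
`u`, then `𝒜^{U,B}_{tv} ∩ L^p(𝓕_u) ⊆ 𝒜^{U,B}_{tu}`, i.e. for `𝓕_u`-measurable
`X ∈ L^p`, `E[U_v(X)|𝓕_t] ≥ B_{tv}` a.s. implies `E[U_u(X)|𝓕_t] ≥ B_{tu}` a.s. -/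
theorem shortfall_acceptance_h_longevity
    {Ω : Type*} {m0 : MeasurableSpace Ω} (P : Measure Ω) [IsProbabilityMeasure P]
    (T : ℝ) (ℱ : Filtration ℝ m0) (p : ℝ≥0∞)
    (U : ℝ → ℝ → ℝ) (B : ℝ → ℝ → ℝ)
    (hU_mono : ∀ u : ℝ, Monotone (U u))
    (hU_conc : ∀ u : ℝ, ConcaveOn ℝ Set.univ (U u))
    (hdec : ∀ t u v : ℝ, 0 ≤ t → t ≤ u → u ≤ v → v ≤ T →
      ∀ x : ℝ, U v x - B t v ≤ U u x - B t u)
    (t u v : ℝ) (h0t : 0 ≤ t) (htu : t ≤ u) (huv : u ≤ v) (hvT : v ≤ T)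
    (X : Ω → ℝ) (hX_meas : StronglyMeasurable[ℱ u] X) (hX : MemLp X p P)
    (hint_u : Integrable (fun ω => U u (X ω)) P)
    (hint_v : Integrable (fun ω => U v (X ω)) P)
    (hacc_v : ∀ᵐ ω ∂P, B t v ≤ (P[fun ω' => U v (X ω') | ℱ t]) ω) :
    ∀ᵐ ω ∂P, B t u ≤ (P[fun ω' => U u (X ω') | ℱ t]) ω := by
  have hpt : ∀ᵐ ω ∂P, (fun ω => U v (X ω) + (B t u - B t v)) ω ≤ U u (X ω) := by
    filter_upwards with ω
    have := hdec t u v h0t htu huv hvT (X ω)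
    linarith
  have hmono := condExp_mono (μ := P) (m := ℱ t)
    (hint_v.add (integrable_const (B t u - B t v))) hint_u hpt
  have hadd := condExp_add (μ := P) (m := ℱ t) hint_v
    (integrable_const (B t u - B t v))
  have hconst := condExp_const (ℱ.le t) (B t u - B t v) (μ := P)
  filter_upwards [hacc_v, hmono, hadd.symm] with ω h1 h2 h3
  have h4 := congrFun hconst ω
  have : (P[fun ω' => U v (X ω') | ℱ t]) ω + (B t u - B t v)
      ≤ (P[fun ω' => U u (X ω') | ℱ t]) ω := by
    rw [← h4]
    calc (P[fun ω' => U v (X ω') | ℱ t]) ω + (P[fun _ => B t u - B t v | ℱ t]) ω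
        = (P[(fun ω => U v (X ω)) + fun _ => B t u - B t v | ℱ t]) ω := h3
      _ ≤ _ := h2
  linarith
end

section
/- Let (ρ_{tu})_{0≤t≤u≤T} be a family of maps ρ_{tu} : L^p(𝓕_u) → L^p(𝓕_t). For an 𝓕_t-measurable m_t ∈ L^p(𝓕_t), define the acceptance set at level m_t by 𝒜^{ρ,m_t}_{tu} = { Y ∈ L^p(𝓕_u) : ρ_{tu}(Y) ≤ m_t a.s. }. Then h-longevity (for all 0 ≤ t ≤ u ≤ v ≤ T and all X ∈ L^p(𝓕_u), ρ_{tu}(X) ≤ ρ_{tv}(X) a.s.) holds if and only if for all 0 ≤ t ≤ u ≤ v ≤ T and all m_t ∈ L^p(𝓕_t), 𝒜^{ρ,m_t}_{tv} ∩ L^p(𝓕_u) ⊆ 𝒜^{ρ,m_t}_{tu}. -/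
open MeasureTheory Real
open scoped ENNReal

/-- `f` belongs to `L^p(m)`: it is in `L^p` and strongly measurable with respect
to the sub-σ-algebra `m`. -/
def LpMeas' {Ω : Type*} {m0 : MeasurableSpace Ω} (P : Measure Ω) (p : ℝ≥0∞)
    (m : MeasurableSpace Ω) (f : Ω → ℝ) : Prop :=
  MemLp f p P ∧ StronglyMeasurable[m] f

/-- For a family of maps `ρ_{tu} : L^p(𝓕_u) → L^p(𝓕_t)`, h-longevity holds if
and only if the acceptance sets at every level `m_t ∈ L^p(𝓕_t)` satisfy
`𝒜^{ρ,m_t}_{tv} ∩ L^p(𝓕_u) ⊆ 𝒜^{ρ,m_t}_{tu}` for all `t ≤ u ≤ v`. -/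
theorem h_longevity_iff_acceptance_inclusion
    {Ω : Type*} {m0 : MeasurableSpace Ω} (P : Measure Ω) [IsProbabilityMeasure P]
    (T : ℝ) (ℱ : Filtration ℝ m0) (p : ℝ≥0∞)
    (ρ : ℝ → ℝ → (Ω → ℝ) → (Ω → ℝ))
    (hρ_into : ∀ t u : ℝ, 0 ≤ t → t ≤ u → u ≤ T →
      ∀ X : Ω → ℝ, LpMeas' P p (ℱ u) X → LpMeas' P p (ℱ t) (ρ t u X)) :
    (∀ t u v : ℝ, 0 ≤ t → t ≤ u → u ≤ v → v ≤ T →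
      ∀ X : Ω → ℝ, LpMeas' P p (ℱ u) X →
        ∀ᵐ ω ∂P, ρ t u X ω ≤ ρ t v X ω)
    ↔ (∀ t u v : ℝ, 0 ≤ t → t ≤ u → u ≤ v → v ≤ T →
      ∀ mt : Ω → ℝ, LpMeas' P p (ℱ t) mt →
        ∀ X : Ω → ℝ, LpMeas' P p (ℱ u) X →
          (∀ᵐ ω ∂P, ρ t v X ω ≤ mt ω) → (∀ᵐ ω ∂P, ρ t u X ω ≤ mt ω)) := by
  constructor
  · intro h t u v ht htu huv hvT mt hmt X hX hv
    filter_upwards [h t u v ht htu huv hvT X hX, hv] with ω h1 h2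
    exact h1.trans h2
  · intro h t u v ht htu huv hvT X hX
    have hXv : LpMeas' P p (ℱ v) X := ⟨hX.1, hX.2.mono (ℱ.mono huv)⟩
    have hmt : LpMeas' P p (ℱ t) (ρ t v X) :=
      hρ_into t v ht (htu.trans huv) hvT X hXv
    exact h t u v ht htu huv hvT (ρ t v X) hmt X hX
      (Filter.Eventually.of_forall fun ω => le_rfl)
end

section
/- Let Ũ : ℝ → ℝ be a strictly increasing, continuous, concave bijection of ℝ, let U : ℝ → ℝ be non-decreasing and concave, f : ℝ × ℝ → ℝ, and B ∈ ℝ. Assume the compatibility identity U(f(y,m)) − B = Ũ(y) − Ũ(−m) holds for all y, m ∈ ℝ. Then the certainty equivalent risk measure coincides with the generalized shortfall: for every X ∈ L^p with Ũ(X) integrable, inf{ m ∈ ℝ : E[U(f(X,m))] ≥ B } = − Ũ^{−1}( E[Ũ(X)] ). -/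
open MeasureTheory Real
open scoped ENNReal

/-- The certainty equivalent risk measure coincides with the generalized
shortfall under the compatibility identity `U(f(y,m)) - B = Ũ(y) - Ũ(-m)`:
`inf{m : E[U(f(X,m))] ≥ B} = -Ũ⁻¹(E[Ũ(X)])`. -/
theorem certaintyEquivalent_eq_generalizedShortfall
    {Ω : Type*} [MeasurableSpace Ω] (P : Measure Ω) [IsProbabilityMeasure P]
    (p : ℝ≥0∞)
    (Ut : ℝ → ℝ) (hUt_mono : StrictMono Ut) (hUt_cont : Continuous Ut)
    (hUt_conc : ConcaveOn ℝ Set.univ Ut) (hUt_bij : Function.Bijective Ut)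
    (U : ℝ → ℝ) (hU_mono : Monotone U) (hU_conc : ConcaveOn ℝ Set.univ U)
    (f : ℝ → ℝ → ℝ) (B : ℝ)
    (hcompat : ∀ y m : ℝ, U (f y m) - B = Ut y - Ut (-m))
    (X : Ω → ℝ) (hX : MemLp X p P)
    (hXint : Integrable (fun ω => Ut (X ω)) P) :
    sInf {m : ℝ | B ≤ ∫ ω, U (f (X ω) m) ∂P} =
      -(Function.invFun Ut (∫ ω, Ut (X ω) ∂P)) := by
  set c := ∫ ω, Ut (X ω) ∂P with hc
  set a := Function.invFun Ut c with ha
  have hUa : Ut a = c := Function.rightInverse_invFun hUt_bij.surjective c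
  have hset : {m : ℝ | B ≤ ∫ ω, U (f (X ω) m) ∂P} = Set.Ici (-a) := by
    ext m
    have hfun : (fun ω => U (f (X ω) m)) = fun ω => Ut (X ω) - Ut (-m) + B := by
      funext ω
      have := hcompat (X ω) m
      linarith
    have hint : ∫ ω, U (f (X ω) m) ∂P = c - Ut (-m) + B := by
      rw [hfun]
      have hi : Integrable (fun ω => Ut (X ω) - Ut (-m)) P := hXint.sub (integrable_const _)
      rw [integral_add hi (integrable_const B),
        integral_sub hXint (integrable_const _), integral_const, integral_const]
      simp [hc]
    simp only [Set.mem_setOf_eq, Set.mem_Ici, hint]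
    constructor
    · intro h
      have h1 : Ut (-m) ≤ c := by linarith
      have h2 : -m ≤ a := by
        by_contra hlt
        push_neg at hlt
        exact absurd (hUa ▸ hUt_mono hlt) (not_lt.2 h1)
      linarith
    · intro h
      have h2 : Ut (-m) ≤ Ut a := hUt_mono.monotone (by linarith)
      rw [hUa] at h2
      linarith
  rw [hset, csInf_Ici]
end

section
/- Fix 0 ≤ t ≤ u ≤ T. Let Ũ_u : ℝ → ℝ be a strictly increasing, continuous, concave bijection of ℝ, U_u : ℝ → ℝ non-decreasing concave, f_u : ℝ × ℝ → ℝ, and B_{0u} ∈ ℝ, such that U_u(f_u(y,m)) − B_{0u} = Ũ_u(y) − Ũ_u(−m) for all y, m ∈ ℝ. Then for every X ∈ L^p(𝓕_u) with Ũ_u(X) integrable and every 𝓕_t-measurable random variable m_t with Ũ_u(−m_t) integrable, the following are equivalent almost surely: E[U_u(f_u(X, m_t)) | 𝓕_t] ≥ B_{0u}, and m_t ≥ − Ũ_u^{−1}( E[Ũ_u(X) | 𝓕_t] ). In particular, the h-generalized shortfall risk measure with data (U_u, f_u, B_{tu} = B_{0u}) coincides with the fully-dynamic certainty equivalent risk measure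 ρ^{Ũ_u}_{tu}(X) = − Ũ_u^{−1}( E[Ũ_u(X) | 𝓕_t] ). -/
open MeasureTheory Real
open scoped ENNReal

/-- Under the compatibility identity `U_u(f_u(y,m)) - B_{0u} = Ũ_u(y) - Ũ_u(-m)`,
the acceptability condition of the h-generalized shortfall is a.s. equivalent to
`m_t ≥ -Ũ_u⁻¹(E[Ũ_u(X)|𝓕_t])`; hence the h-generalized shortfall with data
`(U_u, f_u, B_{tu} = B_{0u})` coincides with the fully-dynamic certainty
equivalent risk measure `ρ^{Ũ_u}_{tu}(X) = -Ũ_u⁻¹(E[Ũ_u(X)|𝓕_t])`. -/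
theorem h_generalizedShortfall_eq_certaintyEquivalent_dynamic
    {Ω : Type*} {m0 : MeasurableSpace Ω} (P : Measure Ω) [IsProbabilityMeasure P]
    (T : ℝ) (ℱ : Filtration ℝ m0) (p : ℝ≥0∞)
    (t u : ℝ) (h0t : 0 ≤ t) (htu : t ≤ u) (huT : u ≤ T)
    (Utu : ℝ → ℝ) (hUtu_mono : StrictMono Utu) (hUtu_cont : Continuous Utu)
    (hUtu_conc : ConcaveOn ℝ Set.univ Utu) (hUtu_bij : Function.Bijective Utu)
    (Uu : ℝ → ℝ) (hUu_mono : Monotone Uu) (hUu_conc : ConcaveOn ℝ Set.univ Uu)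
    (fu : ℝ → ℝ → ℝ) (B0u : ℝ)
    (hcompat : ∀ y m : ℝ, Uu (fu y m) - B0u = Utu y - Utu (-m))
    (X : Ω → ℝ) (hX_meas : StronglyMeasurable[ℱ u] X) (hX : MemLp X p P)
    (hXint : Integrable (fun ω => Utu (X ω)) P)
    (mt : Ω → ℝ) (hmt_meas : StronglyMeasurable[ℱ t] mt)
    (hmtint : Integrable (fun ω => Utu (-mt ω)) P) :
    ∀ᵐ ω ∂P,
      (B0u ≤ (P[fun ω' => Uu (fu (X ω') (mt ω')) | ℱ t]) ω)
        ↔ (-(Function.invFun Utu ((P[fun ω' => Utu (X ω') | ℱ t]) ω)) ≤ mt ω) := by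
  have hle : ℱ t ≤ m0 := ℱ.le t
  have hg_meas : StronglyMeasurable[ℱ t] (fun ω => Utu (-mt ω)) :=
    hUtu_cont.comp_stronglyMeasurable hmt_meas.neg
  -- rewrite the integrand using the compatibility identity
  have hfun : (fun ω => Uu (fu (X ω) (mt ω)))
      = fun ω => (Utu (X ω) - Utu (-mt ω)) + B0u := by
    funext ω
    have := hcompat (X ω) (mt ω)
    linarith
  have hsubint : Integrable (fun ω => Utu (X ω) - Utu (-mt ω)) P := hXint.sub hmtint
  have h1 : P[fun ω => Utu (X ω) - Utu (-mt ω) | ℱ t]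
      =ᵐ[P] fun ω => (P[fun ω' => Utu (X ω') | ℱ t]) ω - Utu (-mt ω) := by
    have := condExp_of_stronglyMeasurable hle hg_meas hmtint (μ := P)
    refine (condExp_sub hXint hmtint (ℱ t)).trans ?_
    rw [this]
    rfl
  have h2 : P[fun ω' => Uu (fu (X ω') (mt ω')) | ℱ t]
      =ᵐ[P] fun ω => ((P[fun ω' => Utu (X ω') | ℱ t]) ω - Utu (-mt ω)) + B0u := by
    rw [hfun]
    refine (condExp_add hsubint (integrable_const B0u) (ℱ t)).trans ?_
    rw [condExp_const hle B0u]
    filter_upwards [h1] with ω hω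
    simp [hω]
  filter_upwards [h2] with ω hω
  rw [hω]
  have hR : Utu (Function.invFun Utu ((P[fun ω' => Utu (X ω') | ℱ t]) ω))
      = (P[fun ω' => Utu (X ω') | ℱ t]) ω :=
    Function.rightInverse_invFun hUtu_bij.surjective _
  constructor
  · intro h
    have hd : Utu (-mt ω) ≤ (P[fun ω' => Utu (X ω') | ℱ t]) ω := by linarith
    rw [← hR] at hd
    have := hUtu_mono.le_iff_le.mp hd
    linarith
  · intro h
    have h' : -mt ω ≤ Function.invFun Utu ((P[fun ω' => Utu (X ω') | ℱ t]) ω) := by linarith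
    have := hUtu_mono.le_iff_le.mpr h'
    rw [hR] at this
    linarith
end

section
/- Let a : [0,T] → [0,∞) be integrable, and for 0 ≤ t ≤ u ≤ T define U_u(x) = 1 − exp(−x + ∫_0^u a(s) ds) and B_{tu} = 1 − exp(∫_0^t a(s) ds). Then for every 𝓕_u-measurable X with e^{−X} integrable and every bounded 𝓕_t-measurable random variable m_t, the following are equivalent almost surely: E[U_u(X + m_t) | 𝓕_t] ≥ B_{tu}, and m_t ≥ ln E[ exp(−X + ∫_t^u a(s) ds) | 𝓕_t ]. In particular, the fully-dynamic shortfall risk measure associated with (U_u, B_{tu}) equals the h-entropic risk measure ρ^h_{tu}(X) = ln E[ exp(−X + ∫_t^u a(s) ds) | 𝓕_t ]. -/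
open MeasureTheory Real
open scoped ENNReal

/-- The fully-dynamic shortfall risk measure with utility
`U_u(x) = 1 - exp(-x + ∫_0^u a(s) ds)` and target `B_{tu} = 1 - exp(∫_0^t a(s) ds)`
equals the h-entropic risk measure: the acceptability condition
`E[U_u(X + m_t) | 𝓕_t] ≥ B_{tu}` is a.s. equivalent to
`m_t ≥ ln E[exp(-X + ∫_t^u a(s) ds) | 𝓕_t]`. -/
theorem shortfall_is_h_entropic
    {Ω : Type*} {m0 : MeasurableSpace Ω} (P : Measure Ω) [IsProbabilityMeasure P]
    (T : ℝ) (ℱ : Filtration ℝ m0)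
    (t u : ℝ) (h0t : 0 ≤ t) (htu : t ≤ u) (huT : u ≤ T)
    (a : ℝ → ℝ) (ha_nonneg : ∀ s, 0 ≤ a s)
    (ha_int : IntervalIntegrable a MeasureTheory.volume 0 T)
    (X : Ω → ℝ) (hX_meas : StronglyMeasurable[ℱ u] X)
    (hX_int : Integrable (fun ω => Real.exp (-X ω)) P)
    (mt : Ω → ℝ) (hmt_meas : StronglyMeasurable[ℱ t] mt)
    (hmt_bdd : MemLp mt ⊤ P) :
    ∀ᵐ ω ∂P,
      (1 - Real.exp (∫ s in (0:ℝ)..t, a s)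
          ≤ (P[fun ω' => 1 - Real.exp (-(X ω' + mt ω') + ∫ s in (0:ℝ)..u, a s) | ℱ t]) ω)
        ↔ (Real.log ((P[fun ω' => Real.exp (-X ω' + ∫ s in t..u, a s) | ℱ t]) ω)
            ≤ mt ω) := by
  have hle : ℱ t ≤ m0 := ℱ.le t
  have hTnn : (0:ℝ) ≤ T := h0t.trans (htu.trans huT)
  have hint1 : IntervalIntegrable a volume 0 t := by
    refine ha_int.mono_set ?_
    rw [Set.uIcc_of_le h0t, Set.uIcc_of_le hTnn]
    exact Set.Icc_subset_Icc le_rfl (htu.trans huT)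
  have hint2 : IntervalIntegrable a volume t u := by
    refine ha_int.mono_set ?_
    rw [Set.uIcc_of_le htu, Set.uIcc_of_le hTnn]
    exact Set.Icc_subset_Icc h0t huT
  set c1 := ∫ s in (0:ℝ)..t, a s with hc1
  set c2 := ∫ s in t..u, a s with hc2
  have hsplit : (∫ s in (0:ℝ)..u, a s) = c1 + c2 :=
    (intervalIntegral.integral_add_adjacent_intervals hint1 hint2).symm
  set g : Ω → ℝ := fun ω => Real.exp (-X ω + c2) with hgdef
  set f : Ω → ℝ := fun ω => Real.exp (-mt ω + c1) with hfdef
  have hg_int : Integrable g P := by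
    have hge : g = fun ω => Real.exp (-X ω) * Real.exp c2 := by
      funext ω; exact Real.exp_add _ _
    rw [hge]; exact hX_int.mul_const _
  -- bound on mt
  obtain ⟨C, hC⟩ : ∃ C : ℝ, ∀ᵐ ω ∂P, ‖mt ω‖ ≤ C := by
    refine ⟨(eLpNormEssSup mt P).toReal, ?_⟩
    have h1 : eLpNormEssSup mt P < ⊤ := by
      have h2 := hmt_bdd.2; rwa [eLpNorm_exponent_top] at h2
    filter_upwards [ae_le_eLpNormEssSup (f := mt) (μ := P)] with ω hω
    calc ‖mt ω‖ = ((‖mt ω‖₊ : ℝ≥0∞)).toReal := by simp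
      _ ≤ _ := ENNReal.toReal_mono h1.ne hω
  have hf_bound : ∀ᵐ ω ∂P, ‖f ω‖ ≤ Real.exp (C + c1) := by
    filter_upwards [hC] with ω hω
    rw [show f ω = Real.exp (-mt ω + c1) from rfl, Real.norm_eq_abs,
      abs_of_pos (Real.exp_pos _)]
    have h2 := (abs_le.mp (Real.norm_eq_abs (mt ω) ▸ hω)).1
    exact Real.exp_le_exp.mpr (by linarith)
  have hf_meas : StronglyMeasurable[ℱ t] f :=
    Real.continuous_exp.comp_stronglyMeasurable (hmt_meas.neg.add_const c1)
  have hf_aesm : AEStronglyMeasurable f P := (hf_meas.mono hle).aestronglyMeasurable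
  have hfg_int : Integrable (f * g) P := hg_int.bdd_mul hf_aesm hf_bound
  set Y := P[g | ℱ t] with hYdef
  have hY_meas : StronglyMeasurable[ℱ t] Y := stronglyMeasurable_condExp
  -- positivity of Y
  have hY_pos : ∀ᵐ ω ∂P, 0 < Y ω := by
    set s := {ω | Y ω ≤ 0} with hsdef
    have hs_meas : MeasurableSet[ℱ t] s := by
      exact hY_meas.measurable measurableSet_Iic
    have h1 : ∫ ω in s, Y ω ∂P = ∫ ω in s, g ω ∂P := setIntegral_condExp hle hg_int hs_meas
    have h2 : ∫ ω in s, Y ω ∂P ≤ 0 :=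
      setIntegral_nonpos (hle _ hs_meas) (fun ω hω => hω)
    have h3 : (0:ℝ) ≤ ∫ ω in s, g ω ∂P :=
      setIntegral_nonneg (hle _ hs_meas) (fun ω _ => (Real.exp_pos _).le)
    have h4 : ∫ ω in s, g ω ∂P = 0 := le_antisymm (h1 ▸ h2) h3
    have h5 : g =ᵐ[P.restrict s] 0 := by
      refine (setIntegral_eq_zero_iff_of_nonneg_ae ?_ (hg_int.integrableOn)).mp h4
      exact ae_of_all _ fun ω => (Real.exp_pos _).le
    have h6 : P s = 0 := by
      have h7 : (P.restrict s) {ω | ¬ g ω = (0:ℝ)} = 0 := by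
        exact ae_iff.mp h5
      have h8 : {ω : Ω | ¬ g ω = (0:ℝ)} = Set.univ := by
        ext ω; simp [hgdef, Real.exp_ne_zero]
      rw [h8] at h7
      rwa [Measure.restrict_apply_univ] at h7
    rw [ae_iff]
    convert h6 using 2
    ext ω; simp [hsdef, not_lt]
  -- condexp computation
  have key : (fun ω' => 1 - Real.exp (-(X ω' + mt ω') + ∫ s in (0:ℝ)..u, a s))
      = fun ω' => 1 - f ω' * g ω' := by
    funext ω
    rw [hsplit, show f ω * g ω = Real.exp (-mt ω + c1) * Real.exp (-X ω + c2) from rfl,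
      ← Real.exp_add]
    ring_nf
  have hcond1 : P[fun ω' => 1 - f ω' * g ω' | ℱ t]
      =ᵐ[P] (fun _ => (1:ℝ)) - f * Y := by
    have e1 : (fun ω' => 1 - f ω' * g ω') = (fun _ => (1:ℝ)) - f * g := by
      funext ω; simp [Pi.sub_apply]
    rw [e1]
    calc P[(fun _ => (1:ℝ)) - f * g | ℱ t]
        =ᵐ[P] P[(fun _ => (1:ℝ)) | ℱ t] - P[f * g | ℱ t] :=
          condExp_sub (integrable_const 1) hfg_int _
      _ =ᵐ[P] (fun _ => (1:ℝ)) - f * Y := by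
          have h9 := condExp_mul_of_stronglyMeasurable_left hf_meas hfg_int hg_int
          filter_upwards [h9] with ω hω
          simp [condExp_const hle, hω, hYdef]
  filter_upwards [hcond1, hY_pos] with ω h1 h2
  rw [key, h1]
  simp only [Pi.sub_apply, Pi.mul_apply]
  have hFE : f ω * Real.exp (mt ω) = Real.exp c1 := by
    rw [show f ω = Real.exp (-mt ω + c1) from rfl, ← Real.exp_add]; ring_nf
  have hFpos : 0 < f ω := Real.exp_pos _
  rw [Real.log_le_iff_le_exp h2]
  constructor
  · intro h
    have h3 : f ω * Y ω ≤ f ω * Real.exp (mt ω) := by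
      rw [hFE]; linarith
    exact le_of_mul_le_mul_left h3 hFpos
  · intro h
    have h3 : f ω * Y ω ≤ Real.exp c1 := by
      rw [← hFE]; exact mul_le_mul_of_nonneg_left h hFpos.le
    linarith
end

section
/- Fix 0 ≤ t ≤ u ≤ T and let φ : L^p(𝓕_u) → L^0(𝓕_t) be (i) monotone decreasing: X ≤ Y a.s. implies φ(Y) ≤ φ(X) a.s., and (ii) 𝓕_t-cash additive: φ(X + m) = φ(X) − m a.s. for every X ∈ L^p(𝓕_u) and every 𝓕_t-measurable m ∈ L^p(𝓕_t). Let D be an 𝓕_u-measurable random variable with 0 < D ≤ 1 a.s. Then the map ρ(X) = φ(D·X) (well-defined on L^p(𝓕_u) since |D| ≤ 1) is cash subadditive: for every X ∈ L^p(𝓕_u) and every 𝓕_t-measurable m ∈ L^p(𝓕_t) with m ≥ 0 a.s., ρ(X + m) ≥ ρ(X) − m a.s. -/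
open MeasureTheory Real
open scoped ENNReal

/-- Discounting a monotone (decreasing), `𝓕_t`-cash additive evaluation `φ` by a
discount factor `0 < D ≤ 1` produces a cash subadditive risk measure:
`ρ(X) = φ(D·X)` satisfies `ρ(X + m) ≥ ρ(X) - m` a.s. for every nonnegative
`𝓕_t`-measurable `m`. -/
theorem discounted_cash_additive_is_cash_subadditive
    {Ω : Type*} {m0 : MeasurableSpace Ω} (P : Measure Ω) [IsProbabilityMeasure P]
    (T : ℝ) (ℱ : Filtration ℝ m0) (p : ℝ≥0∞)
    (t u : ℝ) (h0t : 0 ≤ t) (htu : t ≤ u) (huT : u ≤ T)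
    (φ : (Ω → ℝ) → (Ω → ℝ))
    (hφ_mono : ∀ X Y : Ω → ℝ, LpMeas' P p (ℱ u) X → LpMeas' P p (ℱ u) Y →
      (∀ᵐ ω ∂P, X ω ≤ Y ω) → (∀ᵐ ω ∂P, φ Y ω ≤ φ X ω))
    (hφ_ca : ∀ X : Ω → ℝ, LpMeas' P p (ℱ u) X →
      ∀ m : Ω → ℝ, LpMeas' P p (ℱ t) m →
        (∀ᵐ ω ∂P, φ (fun ω' => X ω' + m ω') ω = φ X ω - m ω))
    (D : Ω → ℝ) (hD_meas : StronglyMeasurable[ℱ u] D)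
    (hD_pos : ∀ᵐ ω ∂P, 0 < D ω) (hD_le : ∀ᵐ ω ∂P, D ω ≤ 1) :
    ∀ X : Ω → ℝ, LpMeas' P p (ℱ u) X →
      ∀ m : Ω → ℝ, LpMeas' P p (ℱ t) m → (∀ᵐ ω ∂P, 0 ≤ m ω) →
        ∀ᵐ ω ∂P,
          φ (fun ω' => D ω' * X ω') ω - m ω
            ≤ φ (fun ω' => D ω' * (X ω' + m ω')) ω := by

  intro X hX m hm hm_nonneg
  -- measurability facts
  have hm_u : StronglyMeasurable[ℱ u] m := hm.2.mono (ℱ.mono htu)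
  have hDX_sm : StronglyMeasurable[ℱ u] (fun ω => D ω * X ω) := hD_meas.mul hX.2
  have hXm_sm : StronglyMeasurable[ℱ u] (fun ω => X ω + m ω) := hX.2.add hm_u
  have hDXm_sm : StronglyMeasurable[ℱ u] (fun ω => D ω * (X ω + m ω)) :=
    hD_meas.mul hXm_sm
  -- a.e. bound |D| ≤ 1
  have hDbd : ∀ᵐ ω ∂P, ‖D ω‖ ≤ 1 := by
    filter_upwards [hD_pos, hD_le] with ω h1 h2
    rw [Real.norm_eq_abs, abs_of_pos h1]; exact h2
  have hmul_mem : ∀ Y : Ω → ℝ, MemLp Y p P → AEStronglyMeasurable (fun ω => D ω * Y ω) P →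
      MemLp (fun ω => D ω * Y ω) p P := by
    intro Y hY hmeas
    refine MemLp.of_le hY hmeas ?_
    filter_upwards [hDbd] with ω h
    rw [norm_mul]
    calc ‖D ω‖ * ‖Y ω‖ ≤ 1 * ‖Y ω‖ := by
          exact mul_le_mul_of_nonneg_right h (norm_nonneg _)
      _ = ‖Y ω‖ := one_mul _
  have hXm_mem : MemLp (fun ω => X ω + m ω) p P := hX.1.add hm.1
  have hDX : LpMeas' P p (ℱ u) (fun ω => D ω * X ω) :=
    ⟨hmul_mem X hX.1 ((hDX_sm.mono (ℱ.le u)).aestronglyMeasurable), hDX_sm⟩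
  have hDXm : LpMeas' P p (ℱ u) (fun ω => D ω * (X ω + m ω)) :=
    ⟨hmul_mem _ hXm_mem ((hDXm_sm.mono (ℱ.le u)).aestronglyMeasurable), hDXm_sm⟩
  have hDXpm : LpMeas' P p (ℱ u) (fun ω => D ω * X ω + m ω) :=
    ⟨hDX.1.add hm.1, hDX_sm.add hm_u⟩
  -- pointwise a.e. comparison: D*(X+m) ≤ D*X + m
  have hle : ∀ᵐ ω ∂P, D ω * (X ω + m ω) ≤ D ω * X ω + m ω := by
    filter_upwards [hD_pos, hD_le, hm_nonneg] with ω h1 h2 h3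
    have : D ω * m ω ≤ m ω := by
      nlinarith
    nlinarith
  have hmono := hφ_mono _ _ hDXm hDXpm hle
  have hca := hφ_ca _ hDX m hm
  filter_upwards [hmono, hca] with ω h1 h2
  calc φ (fun ω' => D ω' * X ω') ω - m ω
      = φ (fun ω' => D ω' * X ω' + m ω') ω := h2.symm
    _ ≤ φ (fun ω' => D ω' * (X ω' + m ω')) ω := h1
end
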